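/- arXiv:1108.0477 — 7 statements merged into one kernel-verified Lean document; each statement's English description precedes it below -/
import Mathlib

section
/- For every τ ≥ 0, the risk of complex soft thresholding at the zero signal equals r(0, τ) = 2·∫_τ^∞ ω·(ω − τ)²·exp(−ω²) dω = 2·χ₂(τ). -/
open MeasureTheory Filter

/-- Complex soft thresholding: `η(x;τ) = (1 - τ/|x|)·x` if `|x| > τ`, else `0`. -/
noncomputable def softThresh (x : ℂ) (τ : ℝ) : ℂ :=
  if τ < ‖x‖ then ((1 - τ / ‖x‖ : ℝ) : ℂ) * x else 0

/-- Risk of complex soft thresholding at amplitude `μ`: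
`r(μ,τ) = ∫_{ℝ²} |η(μ + z₁ + i z₂; τ) − μ|² (1/π) e^{−(z₁²+z₂²)} dz₁ dz₂`. -/
noncomputable def softRisk (μ τ : ℝ) : ℝ :=
  ∫ z : ℝ × ℝ,
    ‖softThresh ((μ : ℂ) + (z.1 : ℂ) + Complex.I * (z.2 : ℂ)) τ - (μ : ℂ)‖ ^ 2 *
      ((1 / Real.pi) * Real.exp (-(z.1 ^ 2 + z.2 ^ 2)))

/-- `χ₂(τ) = ∫_τ^∞ ω (ω − τ)² e^{−ω²} dω`. -/
noncomputable def chi2 (τ : ℝ) : ℝ :=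
  ∫ ω in Set.Ioi τ, ω * (ω - τ) ^ 2 * Real.exp (-ω ^ 2)

lemma abs_softThresh (τ : ℝ) (hτ : 0 ≤ τ) (x : ℂ) :
    ‖softThresh x τ‖ = if τ < ‖x‖ then ‖x‖ - τ else 0 := by
  unfold softThresh
  split_ifs with h
  · have hx : (0:ℝ) < ‖x‖ := lt_of_le_of_lt hτ h
    rw [norm_mul, Complex.norm_real, Real.norm_eq_abs, abs_of_nonneg]
    · field_simp
    · rw [sub_nonneg, div_le_one hx]; exact h.le
  · simp

private lemma softRisk_zero_aux (τ : ℝ) (hτ : 0 ≤ τ) :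
    softRisk 0 τ = 2 * ∫ ω in Set.Ioi τ, ω * (ω - τ) ^ 2 * Real.exp (-ω ^ 2) := by
  set G : ℝ → ℝ := fun r => (if τ < r then (r - τ) ^ 2 else 0) * ((1 / Real.pi) * Real.exp (-r ^ 2))
    with hG
  have habs : ∀ x y : ℝ, ‖(x:ℂ) + Complex.I * y‖ ^ 2 = x ^ 2 + y ^ 2 := by
    intro x y
    rw [← Complex.normSq_eq_norm_sq]
    simp [Complex.normSq_apply]; ring
  have step1 : softRisk 0 τ = ∫ z : ℝ × ℝ, G ‖(z.1:ℂ) + Complex.I * z.2‖ := by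
    unfold softRisk
    congr 1; ext z
    rw [hG]
    simp only [Complex.ofReal_zero, zero_add, sub_zero]
    rw [abs_softThresh τ hτ, habs]
    split_ifs with h <;> simp
  rw [step1,
    ← integral_comp_polarCoord_symm (fun q => G ‖(q.1:ℂ) + Complex.I * q.2‖)]
  have step2 : (∫ p : ℝ × ℝ in Set.Ioi (0:ℝ) ×ˢ Set.Ioo (-Real.pi) Real.pi,
      p.1 • G ‖(((polarCoord.symm p).1 : ℝ):ℂ) + Complex.I * ((polarCoord.symm p).2 : ℝ)‖)
      = ∫ p in Set.Ioi (0:ℝ) ×ˢ Set.Ioo (-Real.pi) Real.pi, p.1 * G p.1 := by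
    apply setIntegral_congr_fun (by exact (isOpen_Ioi.prod isOpen_Ioo).measurableSet)
    rintro ⟨r, θ⟩ ⟨hr, hθ⟩
    simp only [polarCoord_symm_apply, smul_eq_mul]
    have h1 : ‖(↑(r * Real.cos θ):ℂ) + Complex.I * ↑(r * Real.sin θ)‖ = r := by
      have h2 := habs (r * Real.cos θ) (r * Real.sin θ)
      have h3 : (r * Real.cos θ) ^ 2 + (r * Real.sin θ) ^ 2 = r ^ 2 := by
        have := Real.sin_sq_add_cos_sq θ; nlinarith
      have h4 := norm_nonneg ((↑(r * Real.cos θ):ℂ) + Complex.I * ↑(r * Real.sin θ))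
      have hr' : (0:ℝ) < r := hr
      nlinarith [h2, h3]
    rw [h1]
  rw [show polarCoord.target = Set.Ioi (0:ℝ) ×ˢ Set.Ioo (-Real.pi) Real.pi from rfl, step2]
  have step3 : (∫ p in Set.Ioi (0:ℝ) ×ˢ Set.Ioo (-Real.pi) Real.pi, p.1 * G p.1)
      = (∫ r in Set.Ioi (0:ℝ), r * G r) * ∫ _θ in Set.Ioo (-Real.pi) Real.pi, (1:ℝ) := by
    rw [← integral_prod_mul (fun r => r * G r) (fun _ => (1:ℝ)), Measure.prod_restrict,
      ← Measure.volume_eq_prod]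
    simp
  rw [step3]
  have step4 : (∫ _θ in Set.Ioo (-Real.pi) Real.pi, (1:ℝ)) = 2 * Real.pi := by
    simp [Real.volume_Ioo]
    rw [max_eq_left (by positivity)]
    ring
  have hind : ∀ r : ℝ, r * G r =
      Set.indicator (Set.Ioi τ) (fun r => (1/Real.pi) * (r * (r - τ) ^ 2 * Real.exp (-r ^ 2))) r := by
    intro r
    rw [hG]
    by_cases h : τ < r
    · simp only [Set.indicator_apply, Set.mem_Ioi, if_pos h]; ring
    · simp only [Set.indicator_apply, Set.mem_Ioi, if_neg h]; ring
  have step5 : (∫ r in Set.Ioi (0:ℝ), r * G r)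
      = (1/Real.pi) * ∫ r in Set.Ioi τ, r * (r - τ) ^ 2 * Real.exp (-r ^ 2) := by
    simp_rw [hind]
    rw [setIntegral_indicator measurableSet_Ioi]
    have : Set.Ioi (0:ℝ) ∩ Set.Ioi τ = Set.Ioi τ := by
      rw [Set.Ioi_inter_Ioi, sup_eq_right.mpr hτ]
    rw [this, integral_const_mul]
  rw [step4, step5]
  have hπ := Real.pi_ne_zero
  field_simp

/-- The risk of complex soft thresholding at the zero signal:
`r(0, τ) = 2 ∫_τ^∞ ω (ω − τ)² e^{−ω²} dω = 2 χ₂(τ)`. -/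
theorem softRisk_zero (τ : ℝ) (hτ : 0 ≤ τ) :
    softRisk 0 τ = 2 * ∫ ω in Set.Ioi τ, ω * (ω - τ) ^ 2 * Real.exp (-ω ^ 2) ∧
    softRisk 0 τ = 2 * chi2 τ := by
  exact ⟨softRisk_zero_aux τ hτ, softRisk_zero_aux τ hτ⟩
end

section
/- For every τ ≥ 0, the soft-thresholding risk r(μ, τ) is a nondecreasing function of μ on [0, ∞): for all 0 ≤ μ₁ ≤ μ₂, r(μ₁, τ) ≤ r(μ₂, τ). -/
open MeasureTheory Filter

set_option maxHeartbeats 1000000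

lemma sq_le_helper (x y : ℝ) (hy : 0 ≤ y) (h : x^2 ≤ y^2) (hx : 0 ≤ x) : x ≤ y := by nlinarith

lemma key_ineq (a b μ₁ μ₂ s₁ s₂ : ℝ) (hμ₁ : 0 ≤ μ₁) (h : μ₁ ≤ μ₂)
    (hs₁ : 0 ≤ s₁) (hs₂ : 0 ≤ s₂)
    (e₁ : s₁^2 = μ₁^2 + 2*a*μ₁ + (a^2+b^2))
    (e₂ : s₂^2 = μ₂^2 + 2*a*μ₂ + (a^2+b^2)) :
    (a*μ₂ + (a^2+b^2)) * s₁ ≤ (a*μ₁ + (a^2+b^2)) * s₂ := by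
  have hμ₂ : 0 ≤ μ₂ := le_trans hμ₁ h
  have hP1sq : (a*μ₁ + (a^2+b^2))^2 = (a^2+b^2)*s₁^2 - b^2*μ₁^2 := by rw [e₁]; ring
  have hP2sq : (a*μ₂ + (a^2+b^2))^2 = (a^2+b^2)*s₂^2 - b^2*μ₂^2 := by rw [e₂]; ring
  by_cases hP2 : a*μ₂ + (a^2+b^2) ≤ 0
  · by_cases hP1 : 0 ≤ a*μ₁ + (a^2+b^2)
    · exact le_trans (mul_nonpos_of_nonpos_of_nonneg hP2 hs₁) (mul_nonneg hP1 hs₂)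
    · push_neg at hP1
      have key : (-(a*μ₁ + (a^2+b^2)))*s₂ ≤ (-(a*μ₂ + (a^2+b^2)))*s₁ := by
        apply sq_le_helper _ _ (mul_nonneg (by linarith) hs₁)
        · have expand : ((-(a*μ₂ + (a^2+b^2)))*s₁)^2 - ((-(a*μ₁ + (a^2+b^2)))*s₂)^2
              = b^2*(μ₁^2*s₂^2 - μ₂^2*s₁^2) := by
            linear_combination s₁^2 * hP2sq - s₂^2 * hP1sq
          have h1 : -(a*μ₁) > a^2+b^2 := by nlinarith
          have h2 : -(a*μ₂) ≥ a^2+b^2 := by nlinarith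
          have h3 : 0 ≤ -(2*a*μ₁*μ₂) - (a^2+b^2)*(μ₁+μ₂) := by nlinarith [mul_le_mul_of_nonneg_left h2 hμ₁, mul_le_mul_of_nonneg_left h1.le hμ₂]
          have hd : b^2*(μ₁^2*s₂^2 - μ₂^2*s₁^2)
              = b^2*((μ₂-μ₁)*(-(2*a*μ₁*μ₂) - (a^2+b^2)*(μ₁+μ₂))) := by rw [e₁, e₂]; ring
          have h4 : 0 ≤ b^2*((μ₂-μ₁)*(-(2*a*μ₁*μ₂) - (a^2+b^2)*(μ₁+μ₂))) :=
            mul_nonneg (sq_nonneg b) (mul_nonneg (sub_nonneg.2 h) h3)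
          linarith [expand, hd, h4]
        · exact mul_nonneg (by linarith) hs₂
      linarith [key]
  · push_neg at hP2
    have hP1 : 0 ≤ a*μ₁ + (a^2+b^2) := by
      rcases le_or_gt 0 a with ha | ha
      · nlinarith
      · nlinarith
    apply sq_le_helper _ _ (mul_nonneg hP1 hs₂) _ (mul_nonneg hP2.le hs₁)
    have expand : ((a*μ₁ + (a^2+b^2))*s₂)^2 - ((a*μ₂ + (a^2+b^2))*s₁)^2
        = b^2*(μ₂^2*s₁^2 - μ₁^2*s₂^2) := by
      linear_combination s₂^2 * hP1sq - s₁^2 * hP2sq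
    have p1 : 0 ≤ μ₂*(a*μ₁+(a^2+b^2)) := mul_nonneg hμ₂ hP1
    have p2 : 0 ≤ μ₁*(a*μ₂+(a^2+b^2)) := mul_nonneg hμ₁ hP2.le
    have h3 : 0 ≤ 2*a*μ₁*μ₂ + (a^2+b^2)*(μ₁+μ₂) := by nlinarith [p1, p2]
    have hd : b^2*(μ₂^2*s₁^2 - μ₁^2*s₂^2)
        = b^2*((μ₂-μ₁)*(2*a*μ₁*μ₂ + (a^2+b^2)*(μ₁+μ₂))) := by rw [e₁, e₂]; ring
    have h4 : 0 ≤ b^2*((μ₂-μ₁)*(2*a*μ₁*μ₂ + (a^2+b^2)*(μ₁+μ₂))) :=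
      mul_nonneg (sq_nonneg b) (mul_nonneg (sub_nonneg.2 h) h3)
    linarith [expand, hd, h4]

lemma pointwise_mono (τ : ℝ) (hτ : 0 ≤ τ) (μ₁ μ₂ a b : ℝ) (hμ₁ : 0 ≤ μ₁) (h : μ₁ ≤ μ₂) :
    ‖softThresh ((μ₁:ℂ) + (a:ℂ) + Complex.I*(b:ℂ)) τ - (μ₁:ℂ)‖^2 ≤
    ‖softThresh ((μ₂:ℂ) + (a:ℂ) + Complex.I*(b:ℂ)) τ - (μ₂:ℂ)‖^2 := by
  have hμ₂ : 0 ≤ μ₂ := hμ₁.trans h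
  set x₁ : ℂ := (μ₁:ℂ) + (a:ℂ) + Complex.I*(b:ℂ) with hx₁
  set x₂ : ℂ := (μ₂:ℂ) + (a:ℂ) + Complex.I*(b:ℂ) with hx₂
  have hre₁ : x₁.re = μ₁ + a := by simp [hx₁]
  have him₁ : x₁.im = b := by simp [hx₁]
  have hre₂ : x₂.re = μ₂ + a := by simp [hx₂]
  have him₂ : x₂.im = b := by simp [hx₂]
  set s₁ : ℝ := ‖x₁‖ with hs₁def
  set s₂ : ℝ := ‖x₂‖ with hs₂def
  have hs₁ : 0 ≤ s₁ := norm_nonneg _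
  have hs₂ : 0 ≤ s₂ := norm_nonneg _
  have e₁ : s₁^2 = μ₁^2 + 2*a*μ₁ + (a^2+b^2) := by
    rw [hs₁def, Complex.sq_norm, Complex.normSq_apply, hre₁, him₁]; ring
  have e₂ : s₂^2 = μ₂^2 + 2*a*μ₂ + (a^2+b^2) := by
    rw [hs₂def, Complex.sq_norm, Complex.normSq_apply, hre₂, him₂]; ring
  have hx21 : x₂ - x₁ = ((μ₂ - μ₁ : ℝ) : ℂ) := by rw [hx₁, hx₂]; push_cast; ring
  have hd12 : s₁ - s₂ ≤ μ₂ - μ₁ := by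
    have := norm_sub_norm_le x₁ x₂
    rw [show x₁ - x₂ = ((μ₁ - μ₂:ℝ):ℂ) by rw [hx₁, hx₂]; push_cast; ring] at this
    simp only [Complex.norm_real, Real.norm_eq_abs, hs₁def, hs₂def] at this ⊢
    rw [abs_of_nonpos (by linarith)] at this; linarith
  have hd21 : s₂ - s₁ ≤ μ₂ - μ₁ := by
    have := norm_sub_norm_le x₂ x₁
    rw [hx21] at this
    simp only [Complex.norm_real, Real.norm_eq_abs, hs₁def, hs₂def] at this ⊢
    rw [abs_of_nonneg (by linarith)] at this; linarith
  simp only [softThresh, ← hs₁def, ← hs₂def]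
  by_cases h₁ : τ < s₁ <;> by_cases h₂ : τ < s₂
  · -- both active
    have hp₁ : 0 < s₁ := lt_of_le_of_lt hτ h₁
    have hp₂ : 0 < s₂ := lt_of_le_of_lt hτ h₂
    rw [if_pos h₁, if_pos h₂]
    have f₁ : ‖((1 - τ/s₁ : ℝ):ℂ) * x₁ - (μ₁:ℂ)‖^2
        = (a^2+b^2) + τ^2 - 2*τ*(a*μ₁+(a^2+b^2))/s₁ := by
      rw [Complex.sq_norm, Complex.normSq_apply]
      simp only [Complex.sub_re, Complex.sub_im, Complex.mul_re, Complex.mul_im,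
        Complex.ofReal_re, Complex.ofReal_im, hre₁, him₁]
      field_simp
      linear_combination (-τ^2) * e₁
    have f₂ : ‖((1 - τ/s₂ : ℝ):ℂ) * x₂ - (μ₂:ℂ)‖^2
        = (a^2+b^2) + τ^2 - 2*τ*(a*μ₂+(a^2+b^2))/s₂ := by
      rw [Complex.sq_norm, Complex.normSq_apply]
      simp only [Complex.sub_re, Complex.sub_im, Complex.mul_re, Complex.mul_im,
        Complex.ofReal_re, Complex.ofReal_im, hre₂, him₂]
      field_simp
      linear_combination (-τ^2) * e₂
    rw [f₁, f₂]
    have hk := key_ineq a b μ₁ μ₂ s₁ s₂ hμ₁ h hs₁ hs₂ e₁ e₂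
    have hdiv : (a*μ₂+(a^2+b^2))/s₂ ≤ (a*μ₁+(a^2+b^2))/s₁ := by
      rw [div_le_div_iff₀ hp₂ hp₁]; linarith [hk]
    have h5 := mul_le_mul_of_nonneg_left hdiv (by linarith : (0:ℝ) ≤ 2*τ)
    rw [← mul_div_assoc, ← mul_div_assoc] at h5
    linarith [h5]
  · -- μ₁ active, μ₂ dead
    have hp₁ : 0 < s₁ := lt_of_le_of_lt hτ h₁
    push_neg at h₂
    rw [if_pos h₁, if_neg (not_lt.2 h₂)]
    have habs : ‖((1 - τ/s₁ : ℝ):ℂ) * x₁‖ = s₁ - τ := by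
      rw [norm_mul, Complex.norm_real, Real.norm_eq_abs, ← hs₁def,
        abs_of_nonneg (by rw [sub_nonneg, div_le_one hp₁]; exact h₁.le)]
      field_simp
    have step : ‖((1 - τ/s₁ : ℝ):ℂ) * x₁ - (μ₁:ℂ)‖ ≤ μ₂ := by
      calc ‖((1 - τ/s₁ : ℝ):ℂ) * x₁ - (μ₁:ℂ)‖
          ≤ ‖((1 - τ/s₁ : ℝ):ℂ) * x₁‖ + ‖(μ₁:ℂ)‖ := by
            simpa using norm_sub_le (((1 - τ/s₁ : ℝ):ℂ) * x₁) ((μ₁:ℂ))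
        _ = (s₁ - τ) + μ₁ := by rw [habs, Complex.norm_real, Real.norm_eq_abs, abs_of_nonneg hμ₁]
        _ ≤ μ₂ := by linarith
    calc ‖((1 - τ/s₁ : ℝ):ℂ) * x₁ - (μ₁:ℂ)‖^2 ≤ μ₂^2 :=
          pow_le_pow_left₀ (norm_nonneg _) step 2
      _ = ‖0 - (μ₂:ℂ)‖^2 := by
          rw [zero_sub, norm_neg, Complex.norm_real, Real.norm_eq_abs, abs_of_nonneg hμ₂]
  · -- μ₁ dead, μ₂ active
    have hp₂ : 0 < s₂ := lt_of_le_of_lt hτ h₂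
    push_neg at h₁
    rw [if_neg (not_lt.2 h₁), if_pos h₂]
    set c : ℝ := (1 - τ/s₂)*μ₁ + (τ/s₂)*μ₂ with hc
    have hc0 : 0 ≤ c := by
      have h1 : 0 ≤ 1 - τ/s₂ := by rw [sub_nonneg, div_le_one hp₂]; exact h₂.le
      have h2 : 0 ≤ τ/s₂ := div_nonneg hτ hp₂.le
      exact add_nonneg (mul_nonneg h1 hμ₁) (mul_nonneg h2 hμ₂)
    have hrw : ((1 - τ/s₂ : ℝ):ℂ) * x₂ - (μ₂:ℂ) = ((1 - τ/s₂ : ℝ):ℂ) * x₁ - ((c:ℝ):ℂ) := by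
      rw [show x₂ = x₁ + ((μ₂-μ₁:ℝ):ℂ) by rw [← hx21]; ring, hc]
      push_cast [hp₂.ne']
      field_simp
      ring
    have hlow : μ₁ ≤ ‖((1 - τ/s₂ : ℝ):ℂ) * x₂ - (μ₂:ℂ)‖ := by
      rw [hrw]
      have htri : ‖((c:ℝ):ℂ)‖ - ‖((1 - τ/s₂ : ℝ):ℂ) * x₁‖
          ≤ ‖((1 - τ/s₂ : ℝ):ℂ) * x₁ - ((c:ℝ):ℂ)‖ := by
        simpa [norm_sub_rev] using
          norm_sub_norm_le (((c:ℝ):ℂ)) (((1 - τ/s₂ : ℝ):ℂ) * x₁)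
      have h1 : 0 ≤ 1 - τ/s₂ := by rw [sub_nonneg, div_le_one hp₂]; exact h₂.le
      have habs1 : ‖((c:ℝ):ℂ)‖ = c := by rw [Complex.norm_real, Real.norm_eq_abs, abs_of_nonneg hc0]
      have habs2 : ‖((1 - τ/s₂ : ℝ):ℂ) * x₁‖ = (1 - τ/s₂) * s₁ := by
        rw [norm_mul, Complex.norm_real, Real.norm_eq_abs, ← hs₁def, abs_of_nonneg h1]
      have hbound : (1 - τ/s₂) * s₁ ≤ (1 - τ/s₂) * τ := mul_le_mul_of_nonneg_left h₁ h1
      have hkey : μ₁ ≤ c - (1 - τ/s₂) * τ := by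
        have hineq : 0 ≤ μ₂ - μ₁ - s₂ + τ := by linarith
        have hid : c - (1 - τ/s₂)*τ - μ₁ = (τ/s₂)*(μ₂ - μ₁ - s₂ + τ) := by
          rw [hc]; field_simp; ring
        linarith [hid, mul_nonneg (div_nonneg hτ hp₂.le) hineq]
      rw [habs1, habs2] at htri
      linarith [htri, hbound, hkey]
    calc ‖0 - (μ₁:ℂ)‖^2 = μ₁^2 := by
          rw [zero_sub, norm_neg, Complex.norm_real, Real.norm_eq_abs, abs_of_nonneg hμ₁]
      _ ≤ ‖((1 - τ/s₂ : ℝ):ℂ) * x₂ - (μ₂:ℂ)‖^2 :=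
          pow_le_pow_left₀ hμ₁ hlow 2
  · -- both dead
    rw [if_neg h₁, if_neg h₂]
    simp only [zero_sub, norm_neg, Complex.norm_real, Real.norm_eq_abs]
    rw [abs_of_nonneg hμ₁, abs_of_nonneg hμ₂]
    exact pow_le_pow_left₀ hμ₁ h 2

lemma softThresh_measurable (τ : ℝ) : Measurable (fun x : ℂ => softThresh x τ) := by
  unfold softThresh
  refine Measurable.ite (measurableSet_lt measurable_const continuous_norm.measurable) ?_ measurable_const
  exact (Complex.measurable_ofReal.comp (measurable_const.sub
    (measurable_const.div continuous_norm.measurable))).mul measurable_id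

lemma softThresh_abs_le (x : ℂ) (τ : ℝ) (hτ : 0 ≤ τ) :
    ‖softThresh x τ‖ ≤ ‖x‖ := by
  unfold softThresh
  split_ifs with h
  · have hp : 0 < ‖x‖ := lt_of_le_of_lt hτ h
    rw [norm_mul, Complex.norm_real, Real.norm_eq_abs, abs_of_nonneg (by rw [sub_nonneg, div_le_one hp]; exact h.le)]
    nlinarith [div_nonneg hτ hp.le, hp]
  · simp

lemma integrand_meas (μ τ : ℝ) :
    Measurable (fun z : ℝ × ℝ =>
      ‖softThresh ((μ : ℂ) + (z.1 : ℂ) + Complex.I * (z.2 : ℂ)) τ - (μ : ℂ)‖ ^ 2 *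
        ((1 / Real.pi) * Real.exp (-(z.1 ^ 2 + z.2 ^ 2)))) := by
  have hc : Measurable (fun z : ℝ × ℝ => (μ : ℂ) + (z.1 : ℂ) + Complex.I * (z.2 : ℂ)) := by
    apply Measurable.add
    · exact measurable_const.add (Complex.measurable_ofReal.comp measurable_fst)
    · exact measurable_const.mul (Complex.measurable_ofReal.comp measurable_snd)
  have h1 : Measurable (fun z : ℝ × ℝ =>
      ‖softThresh ((μ : ℂ) + (z.1 : ℂ) + Complex.I * (z.2 : ℂ)) τ - (μ : ℂ)‖ ^ 2) :=
    (continuous_norm.measurable.comp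
      (((softThresh_measurable τ).comp hc).sub measurable_const)).pow_const 2
  exact h1.mul ((measurable_const.mul
    (((measurable_fst.pow_const 2).add (measurable_snd.pow_const 2)).neg.exp)))

lemma integrand_integrable (μ τ : ℝ) (hμ : 0 ≤ μ) (hτ : 0 ≤ τ) :
    Integrable (fun z : ℝ × ℝ =>
      ‖softThresh ((μ : ℂ) + (z.1 : ℂ) + Complex.I * (z.2 : ℂ)) τ - (μ : ℂ)‖ ^ 2 *
        ((1 / Real.pi) * Real.exp (-(z.1 ^ 2 + z.2 ^ 2)))) := by
  have I0 : Integrable (fun x : ℝ => Real.exp (-x^2)) := by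
    have := integrable_exp_neg_mul_sq (by norm_num : (0:ℝ) < 1)
    simpa using this
  have I2 : Integrable (fun x : ℝ => x^2 * Real.exp (-x^2)) := by
    have := integrable_rpow_mul_exp_neg_mul_sq (by norm_num : (0:ℝ) < 1) (by norm_num : (-1:ℝ) < 2)
    simp only [Real.rpow_two, one_mul, neg_mul] at this
    simpa using this
  have Ig : Integrable (fun z : ℝ × ℝ =>
      (12*μ^2) * (Real.exp (-z.1^2) * Real.exp (-z.2^2)) +
      3*((z.1^2 * Real.exp (-z.1^2)) * Real.exp (-z.2^2)) +
      3*(Real.exp (-z.1^2) * (z.2^2 * Real.exp (-z.2^2)))) := by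
    rw [Measure.volume_eq_prod]
    exact (((I0.mul_prod I0).const_mul _).add ((I2.mul_prod I0).const_mul 3)).add
      ((I0.mul_prod I2).const_mul 3)
  apply Integrable.mono' Ig (integrand_meas μ τ).aestronglyMeasurable
  filter_upwards with z
  set x : ℂ := (μ : ℂ) + (z.1 : ℂ) + Complex.I * (z.2 : ℂ)
  have habs : ‖softThresh x τ - (μ:ℂ)‖ ≤ 2*μ + |z.1| + |z.2| := by
    calc ‖softThresh x τ - (μ:ℂ)‖
        ≤ ‖softThresh x τ‖ + ‖(μ:ℂ)‖ := by
          simpa using norm_sub_le (softThresh x τ) ((μ:ℂ))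
      _ ≤ ‖x‖ + μ := by
          have := softThresh_abs_le x τ hτ
          rw [Complex.norm_real, Real.norm_eq_abs, abs_of_nonneg hμ]; linarith
      _ ≤ (μ + |z.1| + |z.2|) + μ := by
          have h1 : ‖x‖ ≤ ‖(μ:ℂ) + (z.1:ℂ)‖ + ‖Complex.I * (z.2:ℂ)‖ := by
            simpa using norm_add_le ((μ:ℂ) + (z.1:ℂ)) (Complex.I * (z.2:ℂ))
          have h2 : ‖(μ:ℂ) + (z.1:ℂ)‖ ≤ μ + |z.1| := by
            calc ‖(μ:ℂ) + (z.1:ℂ)‖ ≤ ‖(μ:ℂ)‖ + ‖(z.1:ℂ)‖ := by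
                  simpa using norm_add_le ((μ:ℂ)) ((z.1:ℂ))
              _ = μ + |z.1| := by rw [Complex.norm_real, Real.norm_eq_abs, Complex.norm_real, Real.norm_eq_abs, abs_of_nonneg hμ]
          have h3 : ‖Complex.I * (z.2:ℂ)‖ = |z.2| := by
            rw [norm_mul, Complex.norm_I, one_mul, Complex.norm_real, Real.norm_eq_abs]
          linarith
      _ = 2*μ + |z.1| + |z.2| := by ring
  have hE : Real.exp (-(z.1^2 + z.2^2)) = Real.exp (-z.1^2) * Real.exp (-z.2^2) := by
    rw [← Real.exp_add]; ring_nf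
  have hEpos : 0 < Real.exp (-z.1^2) * Real.exp (-z.2^2) :=
    mul_pos (Real.exp_pos _) (Real.exp_pos _)
  have hπ : 1/Real.pi ≤ 1 := by
    rw [div_le_one Real.pi_pos]; linarith [Real.pi_gt_three]
  have hF : ‖softThresh x τ - (μ:ℂ)‖^2 ≤ (2*μ + |z.1| + |z.2|)^2 :=
    pow_le_pow_left₀ (norm_nonneg _) habs 2
  have hsum : (2*μ + |z.1| + |z.2|)^2 ≤ 12*μ^2 + 3*z.1^2 + 3*z.2^2 := by
    nlinarith [sq_nonneg (2*μ - |z.1|), sq_nonneg (2*μ - |z.2|), sq_nonneg (|z.1| - |z.2|),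
      sq_abs z.1, sq_abs z.2]
  rw [Real.norm_eq_abs, abs_of_nonneg (mul_nonneg (by positivity)
    (mul_nonneg (by positivity) (Real.exp_pos _).le))]
  have step1 : ‖softThresh x τ - (μ:ℂ)‖^2 * ((1/Real.pi) * Real.exp (-(z.1^2+z.2^2)))
      ≤ (12*μ^2 + 3*z.1^2 + 3*z.2^2) * Real.exp (-(z.1^2+z.2^2)) := by
    apply mul_le_mul (le_trans hF hsum)
    · calc (1/Real.pi) * Real.exp (-(z.1^2+z.2^2)) ≤ 1 * Real.exp (-(z.1^2+z.2^2)) :=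
            mul_le_mul_of_nonneg_right hπ (Real.exp_pos _).le
        _ = Real.exp (-(z.1^2+z.2^2)) := one_mul _
    · positivity
    · positivity
  calc ‖softThresh x τ - (μ:ℂ)‖^2 * ((1/Real.pi) * Real.exp (-(z.1^2+z.2^2)))
      ≤ (12*μ^2 + 3*z.1^2 + 3*z.2^2) * Real.exp (-(z.1^2+z.2^2)) := step1
    _ = (12*μ^2) * (Real.exp (-z.1^2) * Real.exp (-z.2^2)) +
      3*((z.1^2 * Real.exp (-z.1^2)) * Real.exp (-z.2^2)) +
      3*(Real.exp (-z.1^2) * (z.2^2 * Real.exp (-z.2^2))) := by rw [hE]; ring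

/-- For every `τ ≥ 0`, the soft-thresholding risk `r(μ, τ)` is nondecreasing in `μ` on
`[0, ∞)`: for all `0 ≤ μ₁ ≤ μ₂`, `r(μ₁, τ) ≤ r(μ₂, τ)`. -/
theorem softRisk_monotone (τ : ℝ) (hτ : 0 ≤ τ) (μ₁ μ₂ : ℝ) (hμ₁ : 0 ≤ μ₁) (h : μ₁ ≤ μ₂) :
    softRisk μ₁ τ ≤ softRisk μ₂ τ := by
  unfold softRisk
  apply integral_mono_of_nonneg
  · filter_upwards with z
    have : 0 ≤ (1 / Real.pi) * Real.exp (-(z.1 ^ 2 + z.2 ^ 2)) := by positivity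
    positivity
  · exact integrand_integrable μ₂ τ (hμ₁.trans h) hτ
  · filter_upwards with z
    apply mul_le_mul_of_nonneg_right (pointwise_mono τ hτ μ₁ μ₂ z.1 z.2 hμ₁ h)
    positivity
end

section
/- For every τ ≥ 0 and every μ ≥ 0, the soft-thresholding risk is bounded by its large-amplitude limit: r(μ, τ) ≤ 1 + τ². -/
open MeasureTheory Filter

section aux

open Real

lemma softRisk_core_aux (μ s q R R' : ℝ) (hs : 0 ≤ s) (hq : 0 ≤ q) (hs2 : s^2 ≤ μ^2*q)
    (hR : 0 ≤ R) (hR' : 0 ≤ R')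
    (hR2 : R^2 = μ^2 + 2*s + q) (hR'2 : R'^2 = μ^2 - 2*s + q) :
    (s - q) * R ≤ (s + q) * R' := by
  rcases le_or_gt s q with h | h
  · have h1 : (s - q) * R ≤ 0 := mul_nonpos_of_nonpos_of_nonneg (by linarith) hR
    have h2 : 0 ≤ (s + q) * R' := mul_nonneg (by linarith) hR'
    linarith
  · have h1 : ((s - q) * R)^2 ≤ ((s + q) * R')^2 := by
      have : ((s + q) * R')^2 - ((s - q) * R)^2 = 4*s*(μ^2*q - s^2) := by
        rw [mul_pow, mul_pow, hR2, hR'2]; ring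
      nlinarith [mul_nonneg hs (sub_nonneg.mpr hs2)]
    have h2 : 0 ≤ (s + q) * R' := mul_nonneg (by linarith) hR'
    nlinarith [sq_nonneg ((s - q) * R - (s + q) * R')]

lemma softRisk_core (μ s q R R' : ℝ) (hq : 0 ≤ q) (hs2 : s^2 ≤ μ^2*q)
    (hR : 0 ≤ R) (hR' : 0 ≤ R')
    (hR2 : R^2 = μ^2 + 2*s + q) (hR'2 : R'^2 = μ^2 - 2*s + q) :
    0 ≤ (s + q) * R' + (q - s) * R := by
  rcases le_total 0 s with h | h
  · have := softRisk_core_aux μ s q R R' h hq hs2 hR hR' hR2 hR'2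
    linarith
  · have := softRisk_core_aux μ (-s) q R' R (by linarith) hq (by nlinarith) hR' hR
      (by linarith) (by linarith)
    linarith

lemma softRisk_half (τ μ s q R R' : ℝ) (hτ : 0 ≤ τ) (hq : 0 ≤ q) (hs2 : s^2 ≤ μ^2*q)
    (hR' : 0 ≤ R')
    (hR2 : R^2 = μ^2 + 2*s + q) (hR'2 : R'^2 = μ^2 - 2*s + q)
    (hlt : τ < R) (hle : R' ≤ τ) :
    μ^2 ≤ q + τ^2 + 2*τ*(s+q)/R := by
  have hRpos : 0 < R := lt_of_le_of_lt hτ hlt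
  have claim1 : (s - q) * R ≤ τ * (s + q) := by
    rcases lt_or_ge q s with h | h
    · have h1 := softRisk_core_aux μ s q R R' (by nlinarith) hq hs2 hRpos.le hR' hR2 hR'2
      have h2 : (s + q) * R' ≤ (s + q) * τ :=
        mul_le_mul_of_nonneg_left hle (by linarith)
      linarith [mul_comm τ (s+q)]
    · rcases le_or_gt 0 (s + q) with h' | h'
      · have h1 : (s - q) * R ≤ 0 := mul_nonpos_of_nonpos_of_nonneg (by linarith) hRpos.le
        have h2 : 0 ≤ τ * (s + q) := mul_nonneg hτ h'
        linarith
      · nlinarith [mul_nonneg (by linarith : (0:ℝ) ≤ q - s) (by linarith : (0:ℝ) ≤ R - τ),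
          mul_nonneg hτ hq]
  have h5 : 2*(s-q) ≤ 2*τ*(s+q)/R := by
    rw [le_div_iff₀ hRpos]; linarith
  nlinarith [sq_nonneg R']

lemma softRisk_key (τ μ a b : ℝ) (hτ : 0 ≤ τ) (hμ : 0 ≤ μ) :
    (if τ < Real.sqrt ((μ+a)^2+b^2) then
      (a^2+b^2) + τ^2 - 2*τ*(μ*a+(a^2+b^2))/Real.sqrt ((μ+a)^2+b^2) else μ^2)
    + (if τ < Real.sqrt ((μ+(-a))^2+(-b)^2) then
      ((-a)^2+(-b)^2) + τ^2 - 2*τ*(μ*(-a)+((-a)^2+(-b)^2))/Real.sqrt ((μ+(-a))^2+(-b)^2)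
      else μ^2)
    ≤ 2*((a^2+b^2)+τ^2) := by
  have e2 : μ*(-a)+((-a)^2+(-b)^2) = -(μ*a)+(a^2+b^2) := by ring
  have e0 : (μ+(-a))^2+(-b)^2 = (μ-a)^2+b^2 := by ring
  have e1 : (-a)^2+(-b)^2 = a^2+b^2 := by ring
  rw [e2, e0, e1]
  set s := μ*a with hs
  set q := a^2+b^2 with hqdef
  set R := Real.sqrt ((μ+a)^2+b^2) with hRdef
  set R' := Real.sqrt ((μ-a)^2+b^2) with hR'def
  have hq : 0 ≤ q := by positivity
  have hR : 0 ≤ R := Real.sqrt_nonneg _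
  have hR' : 0 ≤ R' := Real.sqrt_nonneg _
  have hR2 : R^2 = μ^2 + 2*s + q := by
    rw [hRdef, Real.sq_sqrt (by positivity)]; ring
  have hR'2 : R'^2 = μ^2 - 2*s + q := by
    rw [hR'def, Real.sq_sqrt (by positivity)]; ring
  have hs2 : s^2 ≤ μ^2*q := by rw [hs, hqdef]; nlinarith [sq_nonneg (μ*b)]
  split_ifs with h1 h2 h2
  · have hRpos : 0 < R := lt_of_le_of_lt hτ h1
    have hR'pos : 0 < R' := lt_of_le_of_lt hτ h2
    have hcore := softRisk_core μ s q R R' hq hs2 hR hR' hR2 hR'2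
    have hrw : 2*τ*(s+q)/R + 2*τ*(-s+q)/R' = 2*τ*((s+q)*R' + (q-s)*R)/(R*R') := by
      field_simp; ring
    have hpos : 0 ≤ 2*τ*((s+q)*R' + (q-s)*R)/(R*R') :=
      div_nonneg (mul_nonneg (by linarith) hcore) (by positivity)
    have : 0 ≤ 2*τ*(s+q)/R + 2*τ*(-s+q)/R' := by rw [hrw]; exact hpos
    linarith
  · have := softRisk_half τ μ s q R R' hτ hq hs2 (by linarith) hR2 hR'2 h1 (by linarith)
    linarith
  · have := softRisk_half τ μ (-s) q R' R hτ hq (by nlinarith) (by linarith)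
      (by linarith) (by linarith) h2 (by linarith)
    linarith
  · nlinarith [sq_nonneg R, sq_nonneg R']

lemma softRisk_abs_x (μ a b : ℝ) :
    ‖(μ:ℂ) + (a:ℂ) + Complex.I * (b:ℂ)‖ = Real.sqrt ((μ+a)^2+b^2) := by
  rw [Complex.norm_def, Complex.normSq_apply]
  simp [Complex.add_re, Complex.add_im]
  ring_nf

lemma softRisk_F_eq (τ μ a b : ℝ) (hτ : 0 ≤ τ) :
    ‖softThresh ((μ:ℂ) + (a:ℂ) + Complex.I * (b:ℂ)) τ - (μ:ℂ)‖ ^ 2 =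
    if τ < Real.sqrt ((μ+a)^2+b^2) then
      (a^2+b^2) + τ^2 - 2*τ*(μ*a+(a^2+b^2))/Real.sqrt ((μ+a)^2+b^2)
    else μ^2 := by
  rw [softThresh, softRisk_abs_x]
  set R := Real.sqrt ((μ+a)^2+b^2) with hRdef
  split_ifs with h
  · have hRpos : 0 < R := lt_of_le_of_lt hτ h
    have hR2 : R^2 = (μ+a)^2+b^2 := Real.sq_sqrt (by positivity)
    rw [Complex.sq_norm, Complex.normSq_apply]
    simp only [Complex.sub_re, Complex.sub_im, Complex.mul_re, Complex.mul_im,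
      Complex.add_re, Complex.add_im, Complex.ofReal_re, Complex.ofReal_im,
      Complex.I_re, Complex.I_im]
    field_simp
    linear_combination (-(τ^2)) * hR2
  · simp [Complex.sq_norm]

lemma softRisk_crude (τ μ a b : ℝ) (hτ : 0 ≤ τ) :
    ‖softThresh ((μ:ℂ) + (a:ℂ) + Complex.I * (b:ℂ)) τ - (μ:ℂ)‖ ^ 2
      ≤ 2*((a^2+b^2)+τ^2) := by
  rw [softRisk_F_eq τ μ a b hτ]
  set s := μ*a with hs
  set q := a^2+b^2 with hqdef
  set R := Real.sqrt ((μ+a)^2+b^2) with hRdef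
  have hq : 0 ≤ q := by positivity
  have hR : 0 ≤ R := Real.sqrt_nonneg _
  have hR2 : R^2 = (μ+a)^2+b^2 := Real.sq_sqrt (by positivity)
  have hcs : (s+q)^2 ≤ q*R^2 := by
    rw [hs, hqdef, hR2]; nlinarith [sq_nonneg (a*b - b*(μ+a))]
  split_ifs with h
  · have hRpos : 0 < R := lt_of_le_of_lt hτ h
    have h0 : 0 ≤ (q+τ^2)*R + 2*τ*(s+q) := by
      set c := Real.sqrt q with hcdef
      have hc : 0 ≤ c := Real.sqrt_nonneg _
      have hc2 : c^2 = q := Real.sq_sqrt hq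
      have h2 : -(c*R) ≤ s+q := by
        nlinarith [mul_nonneg hc hR, sq_nonneg (s+q+c*R)]
      have h3 : 2*τ*(-(c*R)) ≤ 2*τ*(s+q) :=
        mul_le_mul_of_nonneg_left h2 (by linarith)
      nlinarith [mul_nonneg hR (sq_nonneg (c-τ))]
    have h1 : -(q+τ^2) ≤ 2*τ*(s+q)/R := by
      rw [le_div_iff₀ hRpos]; nlinarith
    linarith
  · push_neg at h
    have hle : R^2 ≤ τ^2 := by nlinarith
    nlinarith [sq_nonneg (μ + 2*a), sq_nonneg b]

lemma softRisk_int_exp : Integrable (fun x:ℝ => rexp (-x^2)) := by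
  simpa using integrable_exp_neg_mul_sq (b:=1) one_pos

lemma softRisk_int_sq_exp : Integrable (fun x:ℝ => x^2 * rexp (-x^2)) := by
  have := integrable_rpow_mul_exp_neg_mul_sq (b:=1) one_pos (s:=2) (by norm_num)
  simpa [Real.rpow_natCast] using this

lemma softRisk_gauss0 : ∫ x:ℝ, rexp (-x^2) = √π := by simpa using integral_gaussian 1

lemma softRisk_gauss2_Ioi : ∫ x in Set.Ioi (0:ℝ), x^2 * rexp (-x^2) = √π/4 := by
  have h1 : Real.Gamma (3/2) = √π/2 := by
    have h := Real.Gamma_add_one (s := 1/2) (by norm_num)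
    rw [Real.Gamma_one_half_eq] at h
    norm_num at h ⊢
    linarith
  have h2 := integral_comp_rpow_Ioi_of_pos
    (g := fun t => Real.exp (-t) * t ^ ((3:ℝ)/2 - 1)) (p := 2) zero_lt_two
  rw [Real.Gamma_eq_integral (by norm_num : (0:ℝ) < 3/2), ← h2] at h1
  have h3 : ∫ (x : ℝ) in Set.Ioi 0,
      (2 * x ^ ((2:ℝ) - 1)) • (fun t => rexp (-t) * t ^ ((3:ℝ) / 2 - 1)) (x ^ (2:ℝ))
      = ∫ (x : ℝ) in Set.Ioi 0, 2 * (x ^ 2 * rexp (-x ^ 2)) := by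
    refine setIntegral_congr_fun measurableSet_Ioi fun x hx => ?_
    have hx0 : (0:ℝ) < x := hx
    have e1 : x ^ ((2:ℝ) - 1) = x := by norm_num
    have e2 : x ^ (2:ℝ) = x ^ 2 := by rw [Real.rpow_two]
    have e3 : (x ^ 2 : ℝ) ^ ((3:ℝ)/2 - 1) = x := by
      rw [← Real.rpow_natCast x 2, ← Real.rpow_mul hx0.le]
      norm_num
    simp only [e1, e2, e3, smul_eq_mul]
    ring
  rw [h3, MeasureTheory.integral_const_mul] at h1
  linarith

lemma softRisk_gauss2 : ∫ x:ℝ, x^2 * rexp (-x^2) = √π/2 := by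
  have h := integral_comp_abs (f := fun t => t^2 * rexp (-t^2))
  simp only [sq_abs] at h
  rw [h, softRisk_gauss2_Ioi]; ring

end aux

open Real

/-- For every `τ ≥ 0` and `μ ≥ 0`, the soft-thresholding risk is bounded by its
large-amplitude limit: `r(μ, τ) ≤ 1 + τ²`. -/
theorem softRisk_le (τ : ℝ) (hτ : 0 ≤ τ) (μ : ℝ) (hμ : 0 ≤ μ) :
    softRisk μ τ ≤ 1 + τ ^ 2 := by
  classical
  set f : ℝ × ℝ → ℝ := fun z =>
    ‖softThresh ((μ : ℂ) + (z.1 : ℂ) + Complex.I * (z.2 : ℂ)) τ - (μ : ℂ)‖ ^ 2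
    with hfdef
  set w : ℝ × ℝ → ℝ := fun z => (1 / Real.pi) * rexp (-(z.1 ^ 2 + z.2 ^ 2)) with hwdef
  have hπ : (0:ℝ) < Real.pi := Real.pi_pos
  have hrisk : softRisk μ τ = ∫ z : ℝ × ℝ, f z * w z := rfl
  -- measurability
  have mS : Measurable fun x : ℂ => softThresh x τ := by
    unfold softThresh
    refine Measurable.ite
      (measurableSet_lt measurable_const continuous_norm.measurable) ?_ measurable_const
    exact (Complex.measurable_ofReal.comp
      (measurable_const.sub
        (measurable_const.div continuous_norm.measurable))).mul measurable_id
  have mz : Measurable fun z : ℝ × ℝ => (μ:ℂ) + (z.1:ℂ) + Complex.I * (z.2:ℂ) := by fun_prop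
  have mf : Measurable f := by
    apply Measurable.pow_const
    exact continuous_norm.measurable.comp ((mS.comp mz).sub measurable_const)
  have mw : Measurable w := by fun_prop
  -- integrable components
  have I1 : Integrable (fun z : ℝ × ℝ => rexp (-z.1^2) * rexp (-z.2^2)) := by
    rw [Measure.volume_eq_prod]; exact softRisk_int_exp.mul_prod softRisk_int_exp
  have I2 : Integrable (fun z : ℝ × ℝ => (z.1^2 * rexp (-z.1^2)) * rexp (-z.2^2)) := by
    rw [Measure.volume_eq_prod]; exact softRisk_int_sq_exp.mul_prod softRisk_int_exp
  have I3 : Integrable (fun z : ℝ × ℝ => rexp (-z.1^2) * (z.2^2 * rexp (-z.2^2))) := by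
    rw [Measure.volume_eq_prod]; exact softRisk_int_exp.mul_prod softRisk_int_sq_exp
  have hGeq : (fun z : ℝ × ℝ => 2*((z.1^2+z.2^2)+τ^2) * w z) = fun z : ℝ × ℝ =>
      (2/Real.pi) * (((z.1^2 * rexp (-z.1^2)) * rexp (-z.2^2)
        + rexp (-z.1^2) * (z.2^2 * rexp (-z.2^2)))
        + τ^2 * (rexp (-z.1^2) * rexp (-z.2^2))) := by
    funext z
    have : -(z.1^2+z.2^2) = -z.1^2 + -z.2^2 := by ring
    rw [hwdef]; simp only []
    rw [this, Real.exp_add]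
    ring
  have hG : Integrable (fun z : ℝ × ℝ => 2*((z.1^2+z.2^2)+τ^2) * w z) := by
    rw [hGeq]
    exact (((I2.add I3).add (I1.const_mul (τ^2))).const_mul (2/Real.pi))
  -- pointwise bounds
  have hw_nonneg : ∀ z : ℝ × ℝ, 0 ≤ w z := fun z => by positivity
  have hf_nonneg : ∀ z : ℝ × ℝ, 0 ≤ f z := fun z => by rw [hfdef]; positivity
  have hfw : Integrable (fun z : ℝ × ℝ => f z * w z) := by
    refine hG.mono' (mf.mul mw).aestronglyMeasurable (ae_of_all _ fun z => ?_)
    rw [Real.norm_eq_abs, abs_of_nonneg (mul_nonneg (hf_nonneg z) (hw_nonneg z))]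
    exact mul_le_mul_of_nonneg_right (softRisk_crude τ μ z.1 z.2 hτ) (hw_nonneg z)
  have hwneg : ∀ z : ℝ × ℝ, w (-z) = w z := by
    intro z; rw [hwdef]; simp only [Prod.fst_neg, Prod.snd_neg, neg_sq]
  have hfwneg : Integrable (fun z : ℝ × ℝ => f (-z) * w z) := by
    have h1 : Integrable (fun z : ℝ × ℝ => f (-z) * w (-z)) :=
      ((Measure.measurePreserving_neg _).integrable_comp hfw.1).mpr hfw
    refine h1.congr (ae_of_all _ fun z => ?_)
    show f (-z) * w (-z) = f (-z) * w z
    rw [hwneg z]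
  have heq : ∫ z : ℝ × ℝ, f (-z) * w z = ∫ z : ℝ × ℝ, f z * w z := by
    calc ∫ z : ℝ × ℝ, f (-z) * w z = ∫ z : ℝ × ℝ, f (-z) * w (-z) := by
          congr 1; funext z
          show f (-z) * w z = f (-z) * w (-z)
          rw [hwneg z]
      _ = ∫ z : ℝ × ℝ, f z * w z :=
          integral_neg_eq_self (f := fun z : ℝ × ℝ => f z * w z) (μ := volume)
  -- pointwise key bound
  have hkey : ∀ z : ℝ × ℝ, (f z + f (-z)) * w z ≤ 2*((z.1^2+z.2^2)+τ^2) * w z := by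
    intro z
    refine mul_le_mul_of_nonneg_right ?_ (hw_nonneg z)
    rw [hfdef]
    simp only [Prod.fst_neg, Prod.snd_neg]
    rw [softRisk_F_eq τ μ z.1 z.2 hτ, softRisk_F_eq τ μ (-z.1) (-z.2) hτ]
    exact softRisk_key τ μ z.1 z.2 hτ hμ
  -- integral of the bound
  have hGval : ∫ z : ℝ × ℝ, 2*((z.1^2+z.2^2)+τ^2) * w z = 2*(1+τ^2) := by
    rw [hGeq, MeasureTheory.integral_const_mul,
      integral_add
        (f := fun z : ℝ × ℝ => (z.1^2 * rexp (-z.1^2)) * rexp (-z.2^2)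
          + rexp (-z.1^2) * (z.2^2 * rexp (-z.2^2)))
        (g := fun z : ℝ × ℝ => τ^2 * (rexp (-z.1^2) * rexp (-z.2^2)))
        (I2.add I3) (I1.const_mul (τ^2)),
      integral_add
        (f := fun z : ℝ × ℝ => (z.1^2 * rexp (-z.1^2)) * rexp (-z.2^2))
        (g := fun z : ℝ × ℝ => rexp (-z.1^2) * (z.2^2 * rexp (-z.2^2)))
        I2 I3,
      MeasureTheory.integral_const_mul (τ^2)]
    rw [Measure.volume_eq_prod]
    rw [integral_prod_mul (f := fun x : ℝ => x^2 * rexp (-x^2)) (g := fun x : ℝ => rexp (-x^2)),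
      integral_prod_mul (f := fun x : ℝ => rexp (-x^2)) (g := fun x : ℝ => x^2 * rexp (-x^2)),
      integral_prod_mul (f := fun x : ℝ => rexp (-x^2)) (g := fun x : ℝ => rexp (-x^2))]
    rw [softRisk_gauss0, softRisk_gauss2]
    have hsq : √π * √π = π := Real.mul_self_sqrt Real.pi_pos.le
    field_simp
    nlinarith [hsq, Real.sqrt_nonneg π]
  -- conclude
  have hsum : ∫ z : ℝ × ℝ, (f z + f (-z)) * w z
      = (∫ z : ℝ × ℝ, f z * w z) + ∫ z : ℝ × ℝ, f (-z) * w z := by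
    simp_rw [add_mul]
    exact integral_add hfw hfwneg
  have hmono : ∫ z : ℝ × ℝ, (f z + f (-z)) * w z
      ≤ ∫ z : ℝ × ℝ, 2*((z.1^2+z.2^2)+τ^2) * w z := by
    refine integral_mono ?_ hG hkey
    have : (fun z : ℝ × ℝ => (f z + f (-z)) * w z)
        = fun z : ℝ × ℝ => f z * w z + f (-z) * w z := by funext z; ring
    rw [this]; exact hfw.add hfwneg
  rw [hrisk]
  rw [hsum, heq, hGval] at hmono
  linarith
end

section
/- Let f : [0, ∞) → [0, ∞) be continuous, nondecreasing, and concave on [0, ∞), with f(0) > 0, and suppose there exists m̄ > 0 with f(m̄) < m̄. Then f has a unique fixed point m* (which satisfies m* > 0), and for every starting point m₀ ≥ 0 the iterates defined by m_{t+1} = f(m_t) converge to m*. -/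
open Filter

/-- Let `f : [0, ∞) → [0, ∞)` be continuous, nondecreasing and concave on `[0, ∞)`, with
`f(0) > 0`, and suppose `f(m̄) < m̄` for some `m̄ > 0`. Then `f` has a unique fixed point
`m*` (which is positive), and for every starting point `m₀ ≥ 0` the iterates
`m_{t+1} = f(m_t)` converge to `m*`. -/
theorem unique_stable_fixed_point (f : ℝ → ℝ)
    (hmap : ∀ m : ℝ, 0 ≤ m → 0 ≤ f m)
    (hcont : ContinuousOn f (Set.Ici 0))
    (hmono : MonotoneOn f (Set.Ici 0))
    (hconc : ConcaveOn ℝ (Set.Ici 0) f)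
    (hf0 : 0 < f 0)
    (hbar : ∃ mbar : ℝ, 0 < mbar ∧ f mbar < mbar) :
    ∃ mstar : ℝ, 0 < mstar ∧ f mstar = mstar ∧
      (∀ m : ℝ, 0 ≤ m → f m = m → m = mstar) ∧
      (∀ m₀ : ℝ, 0 ≤ m₀ → Tendsto (fun t : ℕ => f^[t] m₀) atTop (nhds mstar)) := by
  obtain ⟨mbar, hmbar, hfbar⟩ := hbar
  -- key concavity inequality: for 0 < x < y, (x/y) * f y < f x
  have key : ∀ x y : ℝ, 0 < x → x < y → (x / y) * f y < f x := by
    intro x y hx hxy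
    have hy : 0 < y := hx.trans hxy
    have hxy1 : x / y < 1 := (div_lt_one hy).2 hxy
    have h2 : 0 < x / y := div_pos hx hy
    have hsum : (1 - x / y) + x / y = 1 := by ring
    have hcc := hconc.2 (Set.self_mem_Ici) (Set.mem_Ici.2 hy.le)
      (by linarith : (0:ℝ) ≤ 1 - x / y) h2.le hsum
    have hxval : (1 - x / y) • (0:ℝ) + (x / y) • y = x := by
      simp only [smul_eq_mul]
      field_simp
      ring
    rw [hxval] at hcc
    simp only [smul_eq_mul] at hcc
    nlinarith
  -- existence of a fixed point via IVT
  have hcont' : ContinuousOn (fun m => f m - m) (Set.Icc 0 mbar) :=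
    (hcont.mono (Set.Icc_subset_Ici_self)).sub continuousOn_id
  have h0mem : (0:ℝ) ∈ Set.Icc (f mbar - mbar) (f 0 - 0) :=
    ⟨by linarith, by linarith⟩
  obtain ⟨mstar, hmem, hfix0⟩ := intermediate_value_Icc' hmbar.le hcont' h0mem
  have hfix : f mstar = mstar := by simpa using sub_eq_zero.mp hfix0
  have hstar0 : (0:ℝ) ≤ mstar := hmem.1
  have hpos : 0 < mstar := by
    have : f 0 ≤ f mstar := hmono Set.self_mem_Ici (Set.mem_Ici.2 hstar0) hstar0
    linarith [hfix]
  -- uniqueness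
  have huniq : ∀ m, 0 ≤ m → f m = m → m = mstar := by
    intro m hm hfm
    by_contra hne
    rcases lt_or_gt_of_ne hne with h | h
    · have hmpos : 0 < m := by
        rcases hm.lt_or_eq with h' | h'
        · exact h'
        · exfalso; rw [← h'] at hfm; linarith
      have hk := key m mstar hmpos h
      rw [hfix, div_mul_cancel₀ _ (ne_of_gt hpos), hfm] at hk
      exact lt_irrefl _ hk
    · have hk := key mstar m hpos h
      rw [hfm, div_mul_cancel₀ _ (ne_of_gt (hpos.trans h)), hfix] at hk
      exact lt_irrefl _ hk
  -- below the fixed point, f m ≥ m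
  have below : ∀ m, 0 ≤ m → m ≤ mstar → m ≤ f m := by
    intro m hm hle
    rcases hm.lt_or_eq with h0 | h0
    · rcases hle.lt_or_eq with h1 | h1
      · have hk := key m mstar h0 h1
        rw [hfix, div_mul_cancel₀ _ (ne_of_gt hpos)] at hk
        exact hk.le
      · rw [h1, hfix]
    · rw [← h0]; exact hf0.le
  -- above the fixed point, f m ≤ m
  have above : ∀ m, mstar ≤ m → f m ≤ m := by
    intro m hle
    rcases hle.lt_or_eq with h1 | h1
    · have hk := key mstar m hpos h1
      rw [hfix] at hk
      have hmne : m ≠ 0 := ne_of_gt (hpos.trans h1)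
      rw [div_mul_eq_mul_div, mul_comm] at hk
      have := (div_lt_iff₀ (hpos.trans h1)).mp hk
      nlinarith
    · rw [← h1, hfix]
  -- the limit of iterates is a fixed point
  have limfix : ∀ (m₀ L : ℝ), 0 ≤ m₀ → 0 ≤ L →
      Tendsto (fun t : ℕ => f^[t] m₀) atTop (nhds L) → f L = L := by
    intro m₀ L hm₀ hL htend
    have hnn : ∀ t, 0 ≤ f^[t] m₀ := by
      intro t; induction t with
      | zero => exact hm₀
      | succ n ih => rw [Function.iterate_succ_apply']; exact hmap _ ih
    have h1 : Tendsto (fun t : ℕ => f^[t] m₀) atTop (nhdsWithin L (Set.Ici 0)) := by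
      rw [tendsto_nhdsWithin_iff]
      exact ⟨htend, Eventually.of_forall hnn⟩
    have h2 : Tendsto (fun t : ℕ => f (f^[t] m₀)) atTop (nhds (f L)) :=
      (hcont L (Set.mem_Ici.2 hL)).tendsto.comp h1
    have h3 : Tendsto (fun t : ℕ => f^[t + 1] m₀) atTop (nhds L) :=
      htend.comp (tendsto_add_atTop_nat 1)
    have h4 : Tendsto (fun t : ℕ => f (f^[t] m₀)) atTop (nhds L) := by
      simpa [Function.iterate_succ_apply'] using h3
    exact tendsto_nhds_unique h2 h4
  refine ⟨mstar, hpos, hfix, huniq, ?_⟩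
  intro m₀ hm₀
  have hnn : ∀ t, 0 ≤ f^[t] m₀ := by
    intro t; induction t with
    | zero => exact hm₀
    | succ n ih => rw [Function.iterate_succ_apply']; exact hmap _ ih
  rcases le_total m₀ mstar with hcase | hcase
  · -- increasing towards mstar
    have hub : ∀ t, f^[t] m₀ ≤ mstar := by
      intro t; induction t with
      | zero => exact hcase
      | succ n ih =>
        rw [Function.iterate_succ_apply']
        calc f (f^[n] m₀) ≤ f mstar :=
              hmono (Set.mem_Ici.2 (hnn n)) (Set.mem_Ici.2 hstar0) ih
          _ = mstar := hfix
    have hmonoseq : Monotone (fun t : ℕ => f^[t] m₀) := by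
      apply monotone_nat_of_le_succ
      intro t
      rw [Function.iterate_succ_apply']
      exact below _ (hnn t) (hub t)
    have hbdd : BddAbove (Set.range fun t : ℕ => f^[t] m₀) :=
      ⟨mstar, by rintro x ⟨t, rfl⟩; exact hub t⟩
    have htend := tendsto_atTop_ciSup hmonoseq hbdd
    set L := ⨆ t : ℕ, f^[t] m₀ with hLdef
    have hL0 : 0 ≤ L := le_trans (hnn 0) (le_ciSup hbdd 0)
    have : f L = L := limfix m₀ L hm₀ hL0 htend
    rw [huniq L hL0 this] at htend
    exact htend
  · -- decreasing towards mstar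
    have hlb : ∀ t, mstar ≤ f^[t] m₀ := by
      intro t; induction t with
      | zero => exact hcase
      | succ n ih =>
        rw [Function.iterate_succ_apply']
        calc mstar = f mstar := hfix.symm
          _ ≤ f (f^[n] m₀) :=
              hmono (Set.mem_Ici.2 hstar0) (Set.mem_Ici.2 (hnn n)) ih
    have hmonoseq : Antitone (fun t : ℕ => f^[t] m₀) := by
      apply antitone_nat_of_succ_le
      intro t
      rw [Function.iterate_succ_apply']
      exact above _ (hlb t)
    have hbdd : BddBelow (Set.range fun t : ℕ => f^[t] m₀) :=
      ⟨mstar, by rintro x ⟨t, rfl⟩; exact hlb t⟩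
    have htend := tendsto_atTop_ciInf hmonoseq hbdd
    set L := ⨅ t : ℕ, f^[t] m₀ with hLdef
    have hL0 : 0 ≤ L := le_trans hstar0 (le_ciInf hlb)
    have : f L = L := limfix m₀ L hm₀ hL0 htend
    rw [huniq L hL0 this] at htend
    exact htend
end

section
/- For every τ > 0 the parametric phase-transition point is well defined and lies on the phase-transition boundary: δ(τ) > 0, ρ(τ) > 0, and ρ(τ)·δ(τ)·(1+τ²) + (1 − ρ(τ)·δ(τ))·2χ₂(τ) = δ(τ); equivalently ρ(τ) = (δ(τ) − 2χ₂(τ)) / ( δ(τ)·(1 + τ² − 2χ₂(τ)) ), which states that the slope at m = 0 of the noiseless MSE map with sparsity fraction ε = ρ(τ)δ(τ) and undersampling ratio δ(τ) equals exactly 1. -/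
open MeasureTheory Filter

/-- `χ₁(τ) = ∫_τ^∞ ω (τ − ω) e^{−ω²} dω`. -/
noncomputable def chi1 (τ : ℝ) : ℝ :=
  ∫ ω in Set.Ioi τ, ω * (τ - ω) * Real.exp (-ω ^ 2)

/-- The undersampling ratio `δ(τ)` along the parametric phase-transition curve. -/
noncomputable def deltaPT (τ : ℝ) : ℝ :=
  (4 * (1 + τ ^ 2) * chi1 τ - 4 * τ * chi2 τ) / (4 * chi1 τ - 2 * τ)

/-- The sparsity ratio `ρ(τ)` along the parametric phase-transition curve. -/
noncomputable def rhoPT (τ : ℝ) : ℝ :=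
  chi1 τ / ((1 + τ ^ 2) * chi1 τ - τ * chi2 τ)

lemma intOn_pow_gauss (n : ℕ) {τ : ℝ} (hτ : 0 < τ) :
    IntegrableOn (fun ω : ℝ => ω ^ n * Real.exp (-ω ^ 2)) (Set.Ioi τ) := by
  have hs : (-1 : ℝ) < (n : ℝ) := by
    have := Nat.cast_nonneg (α := ℝ) n; linarith
  have h := (integrableOn_rpow_mul_exp_neg_mul_sq (b := 1) one_pos hs).mono_set
    (Set.Ioi_subset_Ioi hτ.le)
  refine h.congr_fun (fun x _ => ?_) measurableSet_Ioi
  simp only [Real.rpow_natCast]; norm_num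

lemma intOn_chi1' {τ : ℝ} (hτ : 0 < τ) :
    IntegrableOn (fun ω : ℝ => ω * (ω - τ) * Real.exp (-ω ^ 2)) (Set.Ioi τ) := by
  have h := (intOn_pow_gauss 2 hτ).sub ((intOn_pow_gauss 1 hτ).const_mul τ)
  refine h.congr (Filter.Eventually.of_forall fun x => ?_)
  simp only [Pi.sub_apply]; ring

lemma intOn_chi2 {τ : ℝ} (hτ : 0 < τ) :
    IntegrableOn (fun ω : ℝ => ω * (ω - τ) ^ 2 * Real.exp (-ω ^ 2)) (Set.Ioi τ) := by
  have h := (((intOn_pow_gauss 3 hτ).sub ((intOn_pow_gauss 2 hτ).const_mul (2*τ))).add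
    ((intOn_pow_gauss 1 hτ).const_mul (τ^2)))
  refine h.congr (Filter.Eventually.of_forall fun x => ?_)
  simp only [Pi.sub_apply, Pi.add_apply]; ring

lemma pos_setIntegral {τ : ℝ} {f : ℝ → ℝ} (hint : IntegrableOn f (Set.Ioi τ))
    (hpos : ∀ x ∈ Set.Ioi τ, 0 < f x) : 0 < ∫ x in Set.Ioi τ, f x := by
  rw [setIntegral_pos_iff_support_of_nonneg_ae ?_ hint]
  · have hsub : Set.Ioi τ ⊆ Function.support f ∩ Set.Ioi τ := fun x hx =>
      ⟨(hpos x hx).ne', hx⟩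
    calc (0:ENNReal) < volume (Set.Ioi τ) := by simp [Real.volume_Ioi]
    _ ≤ volume (Function.support f ∩ Set.Ioi τ) := measure_mono hsub
  · filter_upwards [ae_restrict_mem measurableSet_Ioi] with x hx
    exact (hpos x hx).le

lemma cube_gauss_integral {τ : ℝ} (hτ : 0 < τ) :
    ∫ ω in Set.Ioi τ, ω ^ 3 * Real.exp (-ω ^ 2) = (τ ^ 2 + 1) * Real.exp (-τ ^ 2) / 2 := by
  have hderiv : ∀ x ∈ Set.Ici τ, HasDerivAt (fun x : ℝ => -(x ^ 2 + 1) * Real.exp (-x ^ 2) / 2)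
      (x ^ 3 * Real.exp (-x ^ 2)) x := by
    intro x _
    have h0 : HasDerivAt (fun x : ℝ => -x ^ 2) (-(2 * x)) x := by
      simpa [Pi.neg_def] using (hasDerivAt_pow 2 x).neg
    have h1 := h0.exp
    have h2 : HasDerivAt (fun x : ℝ => -(x ^ 2 + 1)) (-(2 * x)) x := by
      simpa [Pi.neg_def] using ((hasDerivAt_pow 2 x).add_const 1).neg
    have := (h2.mul h1).div_const 2
    refine this.congr_deriv ?_
    ring
  have htend : Filter.Tendsto (fun x : ℝ => -(x ^ 2 + 1) * Real.exp (-x ^ 2) / 2)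
      Filter.atTop (nhds 0) := by
    have hcomp : Filter.Tendsto (fun y : ℝ => y * Real.exp (-y) + Real.exp (-y))
        Filter.atTop (nhds 0) := by
      have h1 : Filter.Tendsto (fun y : ℝ => y * Real.exp (-y)) Filter.atTop (nhds 0) := by
        simpa using Real.tendsto_pow_mul_exp_neg_atTop_nhds_zero 1
      simpa using h1.add (Real.tendsto_exp_neg_atTop_nhds_zero)
    have hsq : Filter.Tendsto (fun x : ℝ => x ^ 2) Filter.atTop Filter.atTop :=
      tendsto_pow_atTop two_ne_zero
    have := (hcomp.comp hsq).neg.div_const 2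
    convert this using 2 with x
    · simp [Function.comp]; ring
    · norm_num
  have := integral_Ioi_of_hasDerivAt_of_tendsto' hderiv (intOn_pow_gauss 3 hτ) htend
  rw [this]; ring

lemma chi1_neg {τ : ℝ} (hτ : 0 < τ) : chi1 τ < 0 := by
  have h1 : chi1 τ = -∫ ω in Set.Ioi τ, ω * (ω - τ) * Real.exp (-ω ^ 2) := by
    rw [chi1, ← integral_neg]
    congr 1; funext x; ring
  rw [h1, neg_lt_zero]
  refine pos_setIntegral (intOn_chi1' hτ) fun x hx => ?_
  have hx' : τ < x := hx
  exact mul_pos (mul_pos (hτ.trans hx') (by linarith)) (Real.exp_pos _)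

lemma chi2_pos {τ : ℝ} (hτ : 0 < τ) : 0 < chi2 τ := by
  refine pos_setIntegral (intOn_chi2 hτ) fun x hx => ?_
  have hx' : τ < x := hx
  exact mul_pos (mul_pos (hτ.trans hx') (pow_pos (by linarith) 2)) (Real.exp_pos _)

lemma two_chi2_lt {τ : ℝ} (hτ : 0 < τ) : 2 * chi2 τ < 1 + τ ^ 2 := by
  have hle : chi2 τ ≤ (τ ^ 2 + 1) * Real.exp (-τ ^ 2) / 2 := by
    rw [chi2, ← cube_gauss_integral hτ]
    refine setIntegral_mono_on (intOn_chi2 hτ) (intOn_pow_gauss 3 hτ) measurableSet_Ioi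
      fun x hx => ?_
    have hx' : τ < x := hx
    have he := (Real.exp_pos (-x ^ 2)).le
    have h1 : (0:ℝ) ≤ x := by linarith
    have h2 : (0:ℝ) ≤ 2 * x - τ := by linarith
    nlinarith [mul_nonneg (mul_nonneg (mul_nonneg h1 hτ.le) h2) he]
  have hexp : Real.exp (-τ ^ 2) < 1 := by
    rw [Real.exp_lt_one_iff]
    nlinarith
  nlinarith [sq_nonneg τ]

/-- For every `τ > 0` the parametric phase-transition point is well defined and lies on
the phase-transition boundary: `δ(τ) > 0`, `ρ(τ) > 0`, and
`ρ(τ)δ(τ)(1+τ²) + (1 − ρ(τ)δ(τ))·2χ₂(τ) = δ(τ)`, equivalently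
`ρ(τ) = (δ(τ) − 2χ₂(τ)) / (δ(τ)(1 + τ² − 2χ₂(τ)))`: the slope at `m = 0` of the
noiseless MSE map with sparsity fraction `ε = ρ(τ)δ(τ)` and undersampling ratio `δ(τ)`
equals exactly `1`. -/
theorem phase_transition_parametric (τ : ℝ) (hτ : 0 < τ) :
    0 < deltaPT τ ∧ 0 < rhoPT τ ∧
    rhoPT τ * deltaPT τ * (1 + τ ^ 2) + (1 - rhoPT τ * deltaPT τ) * (2 * chi2 τ) =
      deltaPT τ ∧
    rhoPT τ = (deltaPT τ - 2 * chi2 τ) / (deltaPT τ * (1 + τ ^ 2 - 2 * chi2 τ)) := by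
  have ha := chi1_neg hτ
  have hb := chi2_pos hτ
  have h2b := two_chi2_lt hτ
  have hD1 : 4 * chi1 τ - 2 * τ < 0 := by linarith
  have hD2 : (1 + τ ^ 2) * chi1 τ - τ * chi2 τ < 0 := by nlinarith
  have hnum : 4 * (1 + τ ^ 2) * chi1 τ - 4 * τ * chi2 τ < 0 := by nlinarith
  have hδ : 0 < deltaPT τ := div_pos_of_neg_of_neg hnum hD1
  have hρ : 0 < rhoPT τ := div_pos_of_neg_of_neg ha hD2
  have heq3 : rhoPT τ * deltaPT τ * (1 + τ ^ 2) + (1 - rhoPT τ * deltaPT τ) * (2 * chi2 τ) =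
      deltaPT τ := by
    rw [rhoPT, deltaPT]
    rw [div_mul_div_comm, div_mul_eq_mul_div, one_sub_div (mul_ne_zero hD2.ne hD1.ne), div_mul_eq_mul_div,
      div_add_div _ _ (mul_ne_zero hD2.ne hD1.ne) (mul_ne_zero hD2.ne hD1.ne),
      div_eq_div_iff (mul_ne_zero (mul_ne_zero hD2.ne hD1.ne) (mul_ne_zero hD2.ne hD1.ne)) hD1.ne]
    ring
  refine ⟨hδ, hρ, heq3, ?_⟩
  have hcoef : 0 < 1 + τ ^ 2 - 2 * chi2 τ := by linarith
  rw [eq_div_iff (by positivity)]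
  linear_combination heq3
end

section
/- Along the parametric phase-transition curve, as τ → ∞: δ(τ) → 0, 2·exp(τ²)·δ(τ) → 1, τ²·ρ(τ) → 1, and consequently ρ(τ)·log( 1/(2·δ(τ)) ) → 1; that is, the phase-transition curve satisfies ρ_SE(δ) ∼ 1/log(1/(2δ)) as δ → 0. -/
open MeasureTheory Filter

section PTAux
open Set

lemma pow_exp_bound (n : ℕ) (x : ℝ) :
    |x| ^ n * Real.exp (-(1/2) * x^2) ≤ 2 ^ n * n.factorial := by
  have hfac : (1:ℝ) ≤ n.factorial := by exact_mod_cast n.factorial_pos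
  have h2n : (1:ℝ) ≤ 2 ^ n := one_le_pow₀ (by norm_num)
  have hepos := Real.exp_pos (-(1/2) * x^2)
  rcases le_total (|x|) 1 with h | h
  · have h1 : |x| ^ n ≤ 1 := pow_le_one₀ (abs_nonneg x) h
    have he : Real.exp (-(1/2) * x^2) ≤ 1 := Real.exp_le_one_iff.2 (by nlinarith [sq_nonneg x])
    nlinarith [pow_nonneg (abs_nonneg x) n]
  · have h1 : |x| ^ n ≤ (x^2) ^ n := by
      apply pow_le_pow_left₀ (abs_nonneg x)
      nlinarith [sq_abs x]
    have hb : (x^2/2) ^ n / n.factorial ≤ Real.exp (x^2/2) :=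
      Real.pow_div_factorial_le_exp (x := x^2/2) (by positivity) n
    have hinv : Real.exp (-(1/2) * x^2) = (Real.exp (x^2/2))⁻¹ := by
      rw [← Real.exp_neg]; ring_nf
    have hE := Real.exp_pos (x^2/2)
    have h3 : (x^2) ^ n ≤ 2 ^ n * n.factorial * Real.exp (x^2/2) := by
      have := (div_le_iff₀ (by positivity : (0:ℝ) < (n.factorial:ℝ))).1 hb
      calc (x^2)^n = (x^2/2)^n * 2^n := by rw [div_pow]; field_simp
        _ ≤ (Real.exp (x^2/2) * n.factorial) * 2^n := by nlinarith [pow_pos (show (0:ℝ) < 2 by norm_num) n]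
        _ = 2 ^ n * n.factorial * Real.exp (x^2/2) := by ring
    have h4 : |x| ^ n ≤ 2 ^ n * n.factorial * Real.exp (x^2/2) := h1.trans h3
    rw [hinv]
    have h5 := mul_le_mul_of_nonneg_right h4 (le_of_lt (inv_pos.2 hE))
    rwa [mul_assoc, mul_inv_cancel₀ (ne_of_gt hE), mul_one] at h5

lemma intOn_pow_exp (n : ℕ) (τ : ℝ) :
    IntegrableOn (fun ω : ℝ => ω ^ n * Real.exp (-ω ^ 2)) (Set.Ioi τ) := by
  apply Integrable.integrableOn
  have hint : Integrable (fun x : ℝ => Real.exp (-(1/2) * x ^ 2)) :=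
    integrable_exp_neg_mul_sq (by norm_num)
  apply Integrable.mono' ((hint.const_mul ((2:ℝ) ^ n * n.factorial)))
  · exact ((continuous_pow n).mul (Real.continuous_exp.comp (by continuity))).aestronglyMeasurable
  · filter_upwards with x
    have h1 : Real.exp (-x ^ 2) = Real.exp (-(1/2) * x^2) * Real.exp (-(1/2) * x^2) := by
      rw [← Real.exp_add]; ring_nf
    have h2 := pow_exp_bound n x
    have he1 : Real.exp (-(1/2) * x^2) ≤ 1 := Real.exp_le_one_iff.2 (by nlinarith [sq_nonneg x])
    have hepos := Real.exp_pos (-(1/2) * x^2)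
    rw [norm_mul, Real.norm_eq_abs, Real.norm_eq_abs, abs_pow, Real.abs_exp, h1]
    nlinarith [pow_nonneg (abs_nonneg x) n]

lemma intOn_exp_sq (τ : ℝ) : IntegrableOn (fun ω : ℝ => Real.exp (-ω ^ 2)) (Set.Ioi τ) := by
  simpa using intOn_pow_exp 0 τ

noncomputable def gI (τ : ℝ) : ℝ := ∫ ω in Set.Ioi τ, Real.exp (-ω ^ 2)

lemma exp_neg_sq_tendsto : Tendsto (fun x : ℝ => Real.exp (-x ^ 2)) atTop (nhds 0) := by
  apply Real.tendsto_exp_atBot.comp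
  exact tendsto_neg_atBot_iff.2 (tendsto_pow_atTop two_ne_zero)

lemma pow_mul_exp_neg_sq_tendsto (n : ℕ) :
    Tendsto (fun x : ℝ => (x ^ 2) ^ n * Real.exp (-x ^ 2)) atTop (nhds 0) := by
  have h : Tendsto (fun y : ℝ => y ^ n * Real.exp (-y)) atTop (nhds 0) :=
    Real.tendsto_pow_mul_exp_neg_atTop_nhds_zero n
  exact h.comp (tendsto_pow_atTop two_ne_zero)

lemma M1 (τ : ℝ) : ∫ ω in Set.Ioi τ, ω * Real.exp (-ω ^ 2) = Real.exp (-τ ^ 2) / 2 := by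
  have hderiv : ∀ x ∈ Set.Ici τ, HasDerivAt (fun ω : ℝ => -(Real.exp (-ω ^ 2) / 2))
      (x * Real.exp (-x ^ 2)) x := by
    intro x _
    have h1 : HasDerivAt (fun ω : ℝ => -ω ^ 2) (-(2 * x)) x := by
      simpa using ((hasDerivAt_pow 2 x).fun_neg)
    have h2 := (h1.exp.div_const 2).fun_neg
    refine h2.congr_deriv ?_; ring
  have htend : Tendsto (fun ω : ℝ => -(Real.exp (-ω ^ 2) / 2)) atTop (nhds 0) := by
    have := (exp_neg_sq_tendsto.div_const 2).neg
    simpa using this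
  have := integral_Ioi_of_hasDerivAt_of_tendsto' hderiv (intOn_pow_exp 1 τ |>.congr_fun
    (fun x _ => by ring) measurableSet_Ioi) htend
  rw [this]; ring

lemma M3 (τ : ℝ) : ∫ ω in Set.Ioi τ, ω ^ 3 * Real.exp (-ω ^ 2)
    = (τ ^ 2 + 1) * Real.exp (-τ ^ 2) / 2 := by
  have hderiv : ∀ x ∈ Set.Ici τ, HasDerivAt (fun ω : ℝ => -((ω ^ 2 + 1) * Real.exp (-ω ^ 2) / 2))
      (x ^ 3 * Real.exp (-x ^ 2)) x := by
    intro x _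
    have h1 : HasDerivAt (fun ω : ℝ => -ω ^ 2) (-(2 * x)) x := by
      simpa using ((hasDerivAt_pow 2 x).fun_neg)
    have h0 : HasDerivAt (fun ω : ℝ => ω ^ 2 + 1) (2 * x) x := by
      simpa using ((hasDerivAt_pow 2 x).add_const 1)
    have h2 := ((h0.mul h1.exp).div_const 2).fun_neg
    refine h2.congr_deriv ?_; ring
  have htend : Tendsto (fun ω : ℝ => -((ω ^ 2 + 1) * Real.exp (-ω ^ 2) / 2)) atTop (nhds 0) := by
    have h := ((pow_mul_exp_neg_sq_tendsto 1).add exp_neg_sq_tendsto).div_const 2 |>.neg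
    simp only [pow_one] at h
    have : (fun ω : ℝ => -((ω ^ 2 + 1) * Real.exp (-ω ^ 2) / 2))
        = fun ω : ℝ => -((ω ^ 2 * Real.exp (-ω ^ 2) + Real.exp (-ω ^ 2)) / 2) := by
      funext ω; ring
    rw [this]; simpa using h
  have := integral_Ioi_of_hasDerivAt_of_tendsto' hderiv (intOn_pow_exp 3 τ) htend
  rw [this]; ring

lemma M2 (τ : ℝ) : ∫ ω in Set.Ioi τ, ω ^ 2 * Real.exp (-ω ^ 2)
    = τ * Real.exp (-τ ^ 2) / 2 + gI τ / 2 := by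
  have hderiv : ∀ x ∈ Set.Ici τ, HasDerivAt (fun ω : ℝ => -(ω * Real.exp (-ω ^ 2) / 2))
      (x ^ 2 * Real.exp (-x ^ 2) - Real.exp (-x ^ 2) / 2) x := by
    intro x _
    have h1 : HasDerivAt (fun ω : ℝ => -ω ^ 2) (-(2 * x)) x := by
      simpa using ((hasDerivAt_pow 2 x).fun_neg)
    have h2 := (((hasDerivAt_id x).mul h1.exp).div_const 2).fun_neg
    refine h2.congr_deriv ?_; simp only [id]; ring
  have hint : IntegrableOn (fun x : ℝ => x ^ 2 * Real.exp (-x ^ 2) - Real.exp (-x ^ 2) / 2)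
      (Set.Ioi τ) := (intOn_pow_exp 2 τ).sub ((intOn_exp_sq τ).div_const 2)
  have htend : Tendsto (fun ω : ℝ => -(ω * Real.exp (-ω ^ 2) / 2)) atTop (nhds 0) := by
    have hsq : Tendsto (fun ω : ℝ => ω * Real.exp (-ω ^ 2)) atTop (nhds 0) := by
      apply squeeze_zero_norm' _ (by simpa using pow_mul_exp_neg_sq_tendsto 1)
      filter_upwards [eventually_ge_atTop (1:ℝ)] with x hx
      rw [Real.norm_eq_abs, abs_mul, Real.abs_exp, abs_of_nonneg (by linarith)]
      have : x ≤ x ^ 2 := by nlinarith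
      have := mul_le_mul_of_nonneg_right this (Real.exp_pos (-x^2)).le
      simpa [pow_one] using this
    simpa using (hsq.div_const 2).neg
  have heq := integral_Ioi_of_hasDerivAt_of_tendsto' hderiv hint htend
  have hsplit : ∫ x in Set.Ioi τ, (x ^ 2 * Real.exp (-x ^ 2) - Real.exp (-x ^ 2) / 2)
      = (∫ x in Set.Ioi τ, x ^ 2 * Real.exp (-x ^ 2)) - (∫ x in Set.Ioi τ, Real.exp (-x ^ 2)) / 2 := by
    rw [integral_sub (intOn_pow_exp 2 τ) ((intOn_exp_sq τ).div_const 2), integral_div]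
  rw [hsplit] at heq
  have : gI τ = ∫ x in Set.Ioi τ, Real.exp (-x ^ 2) := rfl
  rw [this]; linarith [heq]

lemma chi1_eq (τ : ℝ) : chi1 τ = -(gI τ / 2) := by
  unfold chi1
  have hcong : ∀ ω ∈ Set.Ioi τ, ω * (τ - ω) * Real.exp (-ω ^ 2)
      = τ * (ω * Real.exp (-ω ^ 2)) - ω ^ 2 * Real.exp (-ω ^ 2) := by
    intro ω _; ring
  rw [setIntegral_congr_fun measurableSet_Ioi hcong,
    integral_sub (((intOn_pow_exp 1 τ).congr_fun (fun x _ => by ring)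
      measurableSet_Ioi).const_mul τ) (intOn_pow_exp 2 τ),
    integral_const_mul]
  have h1 : (∫ ω in Set.Ioi τ, ω * Real.exp (-ω ^ 2)) = Real.exp (-τ ^ 2) / 2 := M1 τ
  rw [show (∫ ω in Set.Ioi τ, ω * Real.exp (-ω ^ 2)) = Real.exp (-τ ^ 2) / 2 from M1 τ, M2 τ]
  ring

lemma chi2_eq (τ : ℝ) : chi2 τ = Real.exp (-τ ^ 2) / 2 - τ * gI τ := by
  unfold chi2
  have hcong : ∀ ω ∈ Set.Ioi τ, ω * (ω - τ) ^ 2 * Real.exp (-ω ^ 2)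
      = ω ^ 3 * Real.exp (-ω ^ 2) - (2 * τ) * (ω ^ 2 * Real.exp (-ω ^ 2))
        + τ ^ 2 * (ω * Real.exp (-ω ^ 2)) := by
    intro ω _; ring
  rw [setIntegral_congr_fun measurableSet_Ioi hcong]
  have hsub : IntegrableOn (fun x : ℝ => x ^ 3 * Real.exp (-x ^ 2)
      - 2 * τ * (x ^ 2 * Real.exp (-x ^ 2))) (Set.Ioi τ) :=
    (intOn_pow_exp 3 τ).sub ((intOn_pow_exp 2 τ).const_mul (2*τ))
  have hC : IntegrableOn (fun x : ℝ => τ ^ 2 * (x * Real.exp (-x ^ 2))) (Set.Ioi τ) :=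
    ((intOn_pow_exp 1 τ).congr_fun (fun x _ => by ring) measurableSet_Ioi).const_mul (τ^2)
  rw [integral_add hsub hC,
    integral_sub (intOn_pow_exp 3 τ) ((intOn_pow_exp 2 τ).const_mul (2*τ)),
    integral_const_mul, integral_const_mul, M3 τ, M2 τ, M1 τ]
  ring

lemma gI_nonneg (τ : ℝ) : 0 ≤ gI τ :=
  setIntegral_nonneg measurableSet_Ioi (fun x _ => (Real.exp_pos _).le)

lemma gI_le (τ : ℝ) (hτ : 0 < τ) : gI τ ≤ Real.exp (-τ ^ 2) / (2 * τ) := by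
  have hmono : gI τ ≤ ∫ ω in Set.Ioi τ, (1/τ) * (ω * Real.exp (-ω ^ 2)) := by
    apply setIntegral_mono_on (intOn_exp_sq τ)
      (((intOn_pow_exp 1 τ).congr_fun (fun x _ => by ring) measurableSet_Ioi).const_mul (1/τ))
      measurableSet_Ioi
    intro x hx
    have hx' : τ < x := hx
    have h1 : 1 ≤ x / τ := (one_le_div hτ).2 hx'.le
    have := mul_le_mul_of_nonneg_right h1 (Real.exp_pos (-x^2)).le
    calc Real.exp (-x ^ 2) = 1 * Real.exp (-x ^ 2) := by ring
      _ ≤ x / τ * Real.exp (-x ^ 2) := this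
      _ = 1/τ * (x * Real.exp (-x ^ 2)) := by ring
  rw [integral_const_mul, M1 τ] at hmono
  calc gI τ ≤ 1/τ * (Real.exp (-τ^2)/2) := hmono
    _ = Real.exp (-τ ^ 2) / (2 * τ) := by ring

lemma gI_ge (τ : ℝ) (hτ : 1 ≤ τ) :
    (1 / (2 * τ) - 1 / (4 * τ ^ 3)) * Real.exp (-τ ^ 2) ≤ gI τ := by
  have hτ0 : 0 < τ := by linarith
  -- FTC for the lower-bound integrand
  have hderiv : ∀ x ∈ Set.Ici τ, HasDerivAt
      (fun ω : ℝ => (-(1 / (2 * ω)) + 1 / (4 * ω ^ 3)) * Real.exp (-ω ^ 2))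
      ((1 - 3 / (4 * x ^ 4)) * Real.exp (-x ^ 2)) x := by
    intro x hx
    have hx0 : x ≠ 0 := by have : (1:ℝ) ≤ x := le_trans hτ hx; linarith
    have h1 : HasDerivAt (fun ω : ℝ => -ω ^ 2) (-(2 * x)) x := by
      simpa using ((hasDerivAt_pow 2 x).fun_neg)
    have hinv : HasDerivAt (fun ω : ℝ => -(1 / (2 * ω)) + 1 / (4 * ω ^ 3))
        (1 / (2 * x ^ 2) - 3 / (4 * x ^ 4)) x := by
      have ha : HasDerivAt (fun ω : ℝ => ω⁻¹) (-(x ^ 2)⁻¹) x := hasDerivAt_inv hx0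
      have hb : HasDerivAt (fun ω : ℝ => (ω ^ 3)⁻¹) (-(3 * x ^ 2) / (x ^ 3) ^ 2) x := by
        have := (hasDerivAt_pow 3 x).fun_inv (pow_ne_zero 3 hx0)
        simpa using this
      have hc := ((ha.div_const 2).fun_neg).fun_add (hb.div_const 4)
      have e : (fun ω : ℝ => -(1 / (2 * ω)) + 1 / (4 * ω ^ 3))
          = fun i => -(i⁻¹ / 2) + (i ^ 3)⁻¹ / 4 := by
        funext ω; rw [one_div, one_div, mul_inv, mul_inv]; ring
      rw [e]; refine hc.congr_deriv ?_
      field_simp; ring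
    have h2 := hinv.mul h1.exp
    refine h2.congr_deriv ?_
    field_simp
    ring
  have htend : Tendsto (fun ω : ℝ => (-(1 / (2 * ω)) + 1 / (4 * ω ^ 3)) * Real.exp (-ω ^ 2))
      atTop (nhds 0) := by
    have hA : Tendsto (fun ω : ℝ => 2 * ω) atTop atTop :=
      (tendsto_id.const_mul_atTop (by norm_num))
    have hB : Tendsto (fun ω : ℝ => 4 * ω ^ 3) atTop atTop :=
      ((tendsto_pow_atTop (by norm_num)).const_mul_atTop (by norm_num))
    have h1 : Tendsto (fun ω : ℝ => 1 / (2 * ω)) atTop (nhds 0) :=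
      tendsto_const_nhds.div_atTop hA
    have h2 : Tendsto (fun ω : ℝ => 1 / (4 * ω ^ 3)) atTop (nhds 0) :=
      tendsto_const_nhds.div_atTop hB
    have ha := (h1.neg).add h2
    simpa using ha.mul exp_neg_sq_tendsto
  have hint' : IntegrableOn (fun x : ℝ => (1 - 3 / (4 * x ^ 4)) * Real.exp (-x ^ 2))
      (Set.Ioi τ) := by
    apply Integrable.mono' (intOn_exp_sq τ)
    · apply ContinuousOn.aestronglyMeasurable _ measurableSet_Ioi
      apply ContinuousOn.mul
      · apply ContinuousOn.sub continuousOn_const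
        apply ContinuousOn.div continuousOn_const
        · fun_prop
        · intro x hx
          have : (1:ℝ) ≤ x := le_trans hτ (le_of_lt hx)
          positivity
      · fun_prop
    · filter_upwards [ae_restrict_mem measurableSet_Ioi] with x hx
      have hx1 : (1:ℝ) ≤ x := le_trans hτ (le_of_lt hx)
      rw [norm_mul, Real.norm_eq_abs, Real.norm_eq_abs, Real.abs_exp]
      have hb : |1 - 3 / (4 * x ^ 4)| ≤ 1 := by
        rw [abs_le]
        have h4 : (1:ℝ) ≤ x ^ 4 := one_le_pow₀ hx1
        constructor
        · have : 3 / (4 * x ^ 4) ≤ 3 / 4 := by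
            apply div_le_div_of_nonneg_left (by norm_num) (by norm_num) (by linarith)
          linarith
        · have : 0 ≤ 3 / (4 * x ^ 4) := by positivity
          linarith
      calc |1 - 3 / (4 * x ^ 4)| * Real.exp (-x ^ 2) ≤ 1 * Real.exp (-x ^ 2) :=
            mul_le_mul_of_nonneg_right hb (Real.exp_pos _).le
        _ = Real.exp (-x ^ 2) := one_mul _
  have heq := integral_Ioi_of_hasDerivAt_of_tendsto' hderiv hint' htend
  have hmono : (∫ x in Set.Ioi τ, (1 - 3 / (4 * x ^ 4)) * Real.exp (-x ^ 2)) ≤ gI τ := by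
    apply setIntegral_mono_on hint' (intOn_exp_sq τ) measurableSet_Ioi
    intro x _
    have h0 : (0:ℝ) ≤ 3 / (4 * x ^ 4) := div_nonneg (by norm_num) (by positivity)
    nlinarith [Real.exp_pos (-x ^ 2), (Real.exp_pos (-x ^ 2)).le]
  rw [heq] at hmono
  have : 0 - (-(1 / (2 * τ)) + 1 / (4 * τ ^ 3)) * Real.exp (-τ ^ 2)
      = (1 / (2 * τ) - 1 / (4 * τ ^ 3)) * Real.exp (-τ ^ 2) := by ring
  rw [this] at hmono
  exact hmono

lemma gI_tendsto : Tendsto gI atTop (nhds 0) := by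
  have h0 := exp_neg_sq_tendsto.mul ((tendsto_id.const_mul_atTop
      (show (0:ℝ) < 2 by norm_num)).inv_tendsto_atTop)
  rw [mul_zero] at h0
  apply tendsto_of_tendsto_of_tendsto_of_le_of_le' tendsto_const_nhds h0
  · exact Eventually.of_forall (fun τ => gI_nonneg τ)
  · filter_upwards [eventually_gt_atTop (0:ℝ)] with τ hτ
    have := gI_le τ hτ
    rw [div_eq_mul_inv] at this
    simpa using this

lemma u_tendsto : Tendsto (fun τ : ℝ => 2 * τ * Real.exp (τ ^ 2) * gI τ) atTop (nhds 1) := by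
  have hlow : Tendsto (fun τ : ℝ => 1 - 1 / (2 * τ ^ 2)) atTop (nhds 1) := by
    have : Tendsto (fun τ : ℝ => 1 / (2 * τ ^ 2)) atTop (nhds 0) :=
      tendsto_const_nhds.div_atTop ((tendsto_pow_atTop two_ne_zero).const_mul_atTop (by norm_num))
    simpa using (tendsto_const_nhds (x := (1:ℝ))).sub this
  apply tendsto_of_tendsto_of_tendsto_of_le_of_le' hlow tendsto_const_nhds
  · filter_upwards [eventually_ge_atTop (1:ℝ)] with τ hτ
    have hτ0 : 0 < τ := by linarith
    have h := gI_ge τ hτ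
    have hX : Real.exp (τ ^ 2) * Real.exp (-τ ^ 2) = 1 := by
      rw [← Real.exp_add]; simp
    have h2 := mul_le_mul_of_nonneg_left h (by positivity : (0:ℝ) ≤ 2 * τ * Real.exp (τ ^ 2))
    calc 1 - 1 / (2 * τ ^ 2)
        = 2 * τ * (1 / (2 * τ) - 1 / (4 * τ ^ 3)) * 1 := by field_simp; ring
      _ = 2 * τ * (1 / (2 * τ) - 1 / (4 * τ ^ 3)) * (Real.exp (τ ^ 2) * Real.exp (-τ ^ 2)) := by
          rw [hX]
      _ = 2 * τ * Real.exp (τ ^ 2) * ((1 / (2 * τ) - 1 / (4 * τ ^ 3)) * Real.exp (-τ ^ 2)) := by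
          ring
      _ ≤ _ := h2
  · filter_upwards [eventually_ge_atTop (1:ℝ)] with τ hτ
    have hτ0 : 0 < τ := by linarith
    have h := gI_le τ hτ0
    have hX : Real.exp (τ ^ 2) * Real.exp (-τ ^ 2) = 1 := by
      rw [← Real.exp_add]; simp
    have h2 := mul_le_mul_of_nonneg_left h (by positivity : (0:ℝ) ≤ 2 * τ * Real.exp (τ ^ 2))
    calc 2 * τ * Real.exp (τ ^ 2) * gI τ ≤ 2 * τ * Real.exp (τ ^ 2) * (Real.exp (-τ ^ 2) / (2 * τ)) := h2
      _ = 1 := by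
          rw [show 2 * τ * Real.exp (τ ^ 2) * (Real.exp (-τ ^ 2) / (2 * τ))
            = (2 * τ / (2 * τ)) * (Real.exp (τ ^ 2) * Real.exp (-τ ^ 2)) by ring,
            hX, mul_one, div_self (by positivity : (2:ℝ) * τ ≠ 0)]

lemma N_pos {τ : ℝ} (hτ : 1 ≤ τ) :
    0 < τ * Real.exp (-τ ^ 2) + gI τ - τ ^ 2 * gI τ := by
  have hτ0 : 0 < τ := by linarith
  have h1 := gI_le τ hτ0
  have h2 := gI_nonneg τ
  have hE := Real.exp_pos (-τ ^ 2)
  have key : (τ ^ 2 - 1) * gI τ ≤ τ * Real.exp (-τ ^ 2) / 2 := by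
    have h3 : (τ ^ 2 - 1) * gI τ ≤ (τ ^ 2 - 1) * (Real.exp (-τ ^ 2) / (2 * τ)) := by
      apply mul_le_mul_of_nonneg_left h1 (by nlinarith)
    have h4 : (τ ^ 2 - 1) * (Real.exp (-τ ^ 2) / (2 * τ)) ≤ τ * Real.exp (-τ ^ 2) / 2 := by
      have h5 : (τ ^ 2 - 1) * (Real.exp (-τ ^ 2) / (2 * τ)) ≤ τ ^ 2 * (Real.exp (-τ ^ 2) / (2 * τ)) :=
        mul_le_mul_of_nonneg_right (by nlinarith) (by positivity)
      have h6 : τ ^ 2 * (Real.exp (-τ ^ 2) / (2 * τ)) = τ * Real.exp (-τ ^ 2) / 2 := by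
        field_simp
      linarith
    linarith
  nlinarith

lemma delta_eq {τ : ℝ} (hτ0 : 0 < τ) :
    deltaPT τ = (τ * Real.exp (-τ ^ 2) + gI τ - τ ^ 2 * gI τ) / (gI τ + τ) := by
  have hG := gI_nonneg τ
  have hden : gI τ + τ ≠ 0 := by positivity
  have hden2 : 4 * -(gI τ / 2) - 2 * τ ≠ 0 := by
    intro h; apply hden; linarith
  unfold deltaPT
  rw [chi1_eq, chi2_eq, div_eq_div_iff hden2 hden]
  ring

lemma rho_eq {τ : ℝ} (hτ : 1 ≤ τ) :
    rhoPT τ = gI τ / (τ * Real.exp (-τ ^ 2) + gI τ - τ ^ 2 * gI τ) := by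
  have hN := N_pos hτ
  have hden2 : (1 + τ ^ 2) * -(gI τ / 2) - τ * (Real.exp (-τ ^ 2) / 2 - τ * gI τ) ≠ 0 := by
    intro h; nlinarith
  unfold rhoPT
  rw [chi1_eq, chi2_eq, div_eq_div_iff hden2 hN.ne']
  ring

set_option maxHeartbeats 1000000 in
lemma part2 : Tendsto (fun τ : ℝ => 2 * Real.exp (τ ^ 2) * deltaPT τ) atTop (nhds 1) := by
  have hu := u_tendsto
  have hinv2 : Tendsto (fun τ : ℝ => (τ ^ 2)⁻¹) atTop (nhds 0) :=
    (tendsto_pow_atTop two_ne_zero).inv_tendsto_atTop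
  have hinv1 : Tendsto (fun τ : ℝ => τ⁻¹) atTop (nhds 0) := tendsto_inv_atTop_zero
  have htar : Tendsto (fun τ : ℝ =>
      (2 - 2 * τ * Real.exp (τ ^ 2) * gI τ + 2 * τ * Real.exp (τ ^ 2) * gI τ * (τ ^ 2)⁻¹)
      / (1 + gI τ * τ⁻¹)) atTop (nhds 1) := by
    have hnum := (tendsto_const_nhds (x := (2:ℝ)).sub hu).add (hu.mul hinv2)
    have hden := tendsto_const_nhds (x := (1:ℝ)).add (gI_tendsto.mul hinv1)
    have := hnum.div hden (by norm_num)
    norm_num at this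
    exact this
  apply htar.congr'
  filter_upwards [eventually_ge_atTop (1:ℝ)] with τ hτ
  have hτ0 : (0:ℝ) < τ := by linarith
  have hG := gI_nonneg τ
  have hden : gI τ + τ ≠ 0 := by positivity
  have hX : Real.exp (τ ^ 2) ≠ 0 := (Real.exp_pos _).ne'
  have hdenL : 1 + gI τ * τ⁻¹ ≠ 0 := by positivity
  rw [delta_eq hτ0, Real.exp_neg, ← mul_div_assoc, div_eq_div_iff hdenL hden]
  field_simp
  ring

lemma u_le_one {τ : ℝ} (hτ : 1 ≤ τ) : 2 * τ * Real.exp (τ ^ 2) * gI τ ≤ 1 := by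
  have hτ0 : 0 < τ := by linarith
  have h := gI_le τ hτ0
  have hX : Real.exp (τ ^ 2) * Real.exp (-τ ^ 2) = 1 := by rw [← Real.exp_add]; simp
  have h2 := mul_le_mul_of_nonneg_left h (by positivity : (0:ℝ) ≤ 2 * τ * Real.exp (τ ^ 2))
  calc 2 * τ * Real.exp (τ ^ 2) * gI τ
      ≤ 2 * τ * Real.exp (τ ^ 2) * (Real.exp (-τ ^ 2) / (2 * τ)) := h2
    _ = 1 := by
        rw [show 2 * τ * Real.exp (τ ^ 2) * (Real.exp (-τ ^ 2) / (2 * τ))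
          = (2 * τ / (2 * τ)) * (Real.exp (τ ^ 2) * Real.exp (-τ ^ 2)) by ring,
          hX, mul_one, div_self (by positivity : (2:ℝ) * τ ≠ 0)]

set_option maxHeartbeats 1000000 in
lemma part3 : Tendsto (fun τ : ℝ => τ ^ 2 * rhoPT τ) atTop (nhds 1) := by
  have hu := u_tendsto
  have hinv2 : Tendsto (fun τ : ℝ => (τ ^ 2)⁻¹) atTop (nhds 0) :=
    (tendsto_pow_atTop two_ne_zero).inv_tendsto_atTop
  have htar : Tendsto (fun τ : ℝ =>
      (2 * τ * Real.exp (τ ^ 2) * gI τ / 2)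
      / (1 + 2 * τ * Real.exp (τ ^ 2) * gI τ * (τ ^ 2)⁻¹ / 2
         - 2 * τ * Real.exp (τ ^ 2) * gI τ / 2)) atTop (nhds 1) := by
    have hnum := hu.div_const 2
    have hden := (tendsto_const_nhds (x := (1:ℝ)).add ((hu.mul hinv2).div_const 2)).sub
      (hu.div_const 2)
    have := hnum.div hden (by norm_num)
    norm_num at this
    exact this
  apply htar.congr'
  filter_upwards [eventually_ge_atTop (1:ℝ)] with τ hτ
  have hτ0 : (0:ℝ) < τ := by linarith
  have hG := gI_nonneg τ
  have hX : (0:ℝ) < Real.exp (τ ^ 2) := Real.exp_pos _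
  have hN := N_pos hτ
  have hul := u_le_one hτ
  have hD2 : 1 + 2 * τ * Real.exp (τ ^ 2) * gI τ * (τ ^ 2)⁻¹ / 2
      - 2 * τ * Real.exp (τ ^ 2) * gI τ / 2 ≠ 0 := by
    have h1 : (0:ℝ) ≤ 2 * τ * Real.exp (τ ^ 2) * gI τ * (τ ^ 2)⁻¹ / 2 := by positivity
    nlinarith
  rw [rho_eq hτ, ← mul_div_assoc, div_eq_div_iff hD2 hN.ne', Real.exp_neg]
  field_simp

lemma part1 : Tendsto (fun τ : ℝ => deltaPT τ) atTop (nhds 0) := by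
  have h := part2.mul (exp_neg_sq_tendsto.div_const 2)
  norm_num at h
  apply h.congr'
  apply Eventually.of_forall
  intro τ
  have hX : Real.exp (τ ^ 2) ≠ 0 := (Real.exp_pos _).ne'
  show 2 * Real.exp (τ ^ 2) * deltaPT τ * (Real.exp (-τ ^ 2) / 2) = deltaPT τ
  rw [Real.exp_neg]
  field_simp

lemma part4 : Tendsto (fun τ : ℝ => rhoPT τ
    * Real.log (1 / (2 * deltaPT τ))) atTop (nhds 1) := by
  have hinv2 : Tendsto (fun τ : ℝ => (τ ^ 2)⁻¹) atTop (nhds 0) :=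
    (tendsto_pow_atTop two_ne_zero).inv_tendsto_atTop
  have hlog : Tendsto (fun τ : ℝ => Real.log (2 * Real.exp (τ ^ 2) * deltaPT τ))
      atTop (nhds 0) := by
    have := ((Real.continuousAt_log one_ne_zero).tendsto).comp part2
    rw [Real.log_one] at this; exact this
  have htar : Tendsto (fun τ : ℝ => (τ ^ 2 * rhoPT τ)
      * (1 - Real.log (2 * Real.exp (τ ^ 2) * deltaPT τ) * (τ ^ 2)⁻¹)) atTop (nhds 1) := by
    have h1 := tendsto_const_nhds (x := (1:ℝ)).sub (hlog.mul hinv2)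
    have := part3.mul h1
    norm_num at this ⊢
    exact this
  apply htar.congr'
  have hpos : ∀ᶠ τ : ℝ in atTop, 1/2 < 2 * Real.exp (τ ^ 2) * deltaPT τ :=
    part2.eventually (eventually_gt_nhds (by norm_num))
  filter_upwards [eventually_ge_atTop (1:ℝ), hpos] with τ hτ hp
  have hτ0 : (0:ℝ) < τ := by linarith
  have hX : (0:ℝ) < Real.exp (τ ^ 2) := Real.exp_pos _
  have hδ : 0 < deltaPT τ := by nlinarith
  have hlogid : Real.log (1 / (2 * deltaPT τ))
      = τ ^ 2 - Real.log (2 * Real.exp (τ ^ 2) * deltaPT τ) := by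
    rw [show (1:ℝ) / (2 * deltaPT τ)
      = Real.exp (τ ^ 2) / (2 * Real.exp (τ ^ 2) * deltaPT τ) by field_simp,
      Real.log_div hX.ne' (by positivity), Real.log_exp]
  rw [hlogid]
  field_simp

end PTAux

/-- Along the parametric phase-transition curve, as `τ → ∞`: `δ(τ) → 0`,
`2 e^{τ²} δ(τ) → 1`, `τ² ρ(τ) → 1`, and consequently `ρ(τ)·log(1/(2δ(τ))) → 1`;
i.e. the phase-transition curve satisfies `ρ_SE(δ) ∼ 1/log(1/(2δ))` as `δ → 0`. -/

theorem phase_transition_asymptotics :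
    Tendsto (fun τ : ℝ => deltaPT τ) atTop (nhds 0) ∧
    Tendsto (fun τ : ℝ => 2 * Real.exp (τ ^ 2) * deltaPT τ) atTop (nhds 1) ∧
    Tendsto (fun τ : ℝ => τ ^ 2 * rhoPT τ) atTop (nhds 1) ∧
    Tendsto (fun τ : ℝ => rhoPT τ * Real.log (1 / (2 * deltaPT τ))) atTop (nhds 1) :=
  ⟨part1, part2, part3, part4⟩
end

section
/- The Gaussian tail integral χ₂ satisfies the Laplace-type asymptotic lim_{τ → ∞} 4·τ²·exp(τ²)·χ₂(τ) = 1; that is, ∫_τ^∞ ω·(ω − τ)²·exp(−ω²) dω ∼ exp(−τ²)/(4τ²) as τ → ∞. -/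
open MeasureTheory Filter

lemma key_int (n : ℕ) {b : ℝ} (hb : 0 < b) :
    IntegrableOn (fun s : ℝ => s ^ n * Real.exp (-(b * s))) (Set.Ioi 0) := by
  have h := integrableOn_rpow_mul_exp_neg_mul_rpow (s := (n : ℝ)) (p := 1)
    (by exact_mod_cast neg_one_lt_zero.trans_le (Nat.cast_nonneg n)) one_pos hb
  refine h.congr_fun (fun x hx => ?_) measurableSet_Ioi
  simp [Real.rpow_natCast, Real.rpow_one, neg_mul]

lemma key (n : ℕ) {b : ℝ} (hb : 0 < b) :
    ∫ s in Set.Ioi (0:ℝ), s ^ n * Real.exp (-(b * s)) = (n.factorial : ℝ) / b ^ (n + 1) := by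
  have h := Real.integral_rpow_mul_exp_neg_mul_Ioi (a := (n : ℝ) + 1) (by positivity) hb
  rw [show ((n:ℝ) + 1 - 1) = (n:ℝ) by ring] at h
  simp_rw [Real.rpow_natCast] at h
  rw [h, Real.Gamma_nat_eq_factorial,
    show ((n:ℝ) + 1) = ((n + 1 : ℕ) : ℝ) by push_cast; ring, Real.rpow_natCast,
    one_div, inv_pow, inv_mul_eq_div]

lemma chi2_shift (τ : ℝ) :
    chi2 τ = ∫ s in Set.Ioi (0:ℝ), (s + τ) * s ^ 2 * Real.exp (-(s + τ) ^ 2) := by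
  unfold chi2
  rw [← integral_indicator measurableSet_Ioi, ← integral_indicator measurableSet_Ioi,
    ← integral_add_right_eq_self
      ((Set.Ioi τ).indicator fun ω => ω * (ω - τ) ^ 2 * Real.exp (-ω ^ 2)) τ]
  congr 1; funext s
  by_cases h : 0 < s
  · rw [Set.indicator_of_mem (by simpa using h), Set.indicator_of_mem (Set.mem_Ioi.2 h)]
    ring_nf
  · rw [Set.indicator_of_notMem (by simpa using h), Set.indicator_of_notMem (by simpa using h)]

lemma chi2_bounds (τ : ℝ) (hτ : 1 ≤ τ) :
    1 - 3 / τ ^ 2 ≤ 4 * τ ^ 2 * Real.exp (τ ^ 2) * chi2 τ ∧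
      4 * τ ^ 2 * Real.exp (τ ^ 2) * chi2 τ ≤ 1 + 3 / (2 * τ ^ 2) := by
  have hτ0 : (0:ℝ) < τ := lt_of_lt_of_le one_pos hτ
  have hb : (0:ℝ) < 2 * τ := by linarith
  set gmid : ℝ → ℝ := fun s =>
    4 * τ ^ 2 * ((s + τ) * s ^ 2 * (Real.exp (-(2 * τ * s)) * Real.exp (-s ^ 2))) with hgmid
  set gup : ℝ → ℝ := fun s =>
    4 * τ ^ 3 * (s ^ 2 * Real.exp (-(2 * τ * s))) + 4 * τ ^ 2 * (s ^ 3 * Real.exp (-(2 * τ * s)))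
    with hgup
  set glo : ℝ → ℝ := fun s =>
    4 * τ ^ 3 * (s ^ 2 * Real.exp (-(2 * τ * s))) - 4 * τ ^ 3 * (s ^ 4 * Real.exp (-(2 * τ * s)))
    with hglo
  have hrep : 4 * τ ^ 2 * Real.exp (τ ^ 2) * chi2 τ = ∫ s in Set.Ioi (0:ℝ), gmid s := by
    rw [chi2_shift, ← integral_const_mul _ _]
    refine setIntegral_congr_fun measurableSet_Ioi (fun s _ => ?_)
    show 4 * τ ^ 2 * Real.exp (τ ^ 2) * ((s + τ) * s ^ 2 * Real.exp (-(s + τ) ^ 2)) =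
      4 * τ ^ 2 * ((s + τ) * s ^ 2 * (Real.exp (-(2 * τ * s)) * Real.exp (-s ^ 2)))
    rw [show Real.exp (-(2 * τ * s)) * Real.exp (-s ^ 2) = Real.exp (τ ^ 2) * Real.exp (-(s + τ) ^ 2)
      by rw [← Real.exp_add, ← Real.exp_add]; ring_nf]
    ring
  -- pointwise bounds on Ioi 0
  have hup_pt : ∀ s ∈ Set.Ioi (0:ℝ), gmid s ≤ gup s := by
    intro s hs
    have hs0 : 0 < s := hs
    have h1 : Real.exp (-(2 * τ * s)) * Real.exp (-s ^ 2) ≤ Real.exp (-(2 * τ * s)) := by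
      rw [← Real.exp_add]
      apply Real.exp_le_exp.2; nlinarith [sq_nonneg s]
    have hc : (0:ℝ) ≤ 4 * τ ^ 2 * ((s + τ) * s ^ 2) := by positivity
    calc gmid s = 4 * τ ^ 2 * ((s + τ) * s ^ 2) *
            (Real.exp (-(2 * τ * s)) * Real.exp (-s ^ 2)) := by rw [hgmid]; ring
      _ ≤ 4 * τ ^ 2 * ((s + τ) * s ^ 2) * Real.exp (-(2 * τ * s)) :=
          mul_le_mul_of_nonneg_left h1 hc
      _ = gup s := by rw [hgup]; ring
  have hmid_nonneg : ∀ s ∈ Set.Ioi (0:ℝ), 0 ≤ gmid s := by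
    intro s hs
    have hs0 : (0:ℝ) < s := hs
    have := Real.exp_pos (-(2 * τ * s)); have := Real.exp_pos (-s ^ 2)
    rw [hgmid]; positivity
  have hlo_pt : ∀ s ∈ Set.Ioi (0:ℝ), glo s ≤ gmid s := by
    intro s hs
    have hs0 : (0:ℝ) < s := hs
    have hE1 : (0:ℝ) < Real.exp (-(2 * τ * s)) := Real.exp_pos _
    have h2 : 1 - s ^ 2 ≤ Real.exp (-s ^ 2) := by nlinarith [Real.add_one_le_exp (-s ^ 2)]
    have hE2 : (0:ℝ) < Real.exp (-s ^ 2) := Real.exp_pos _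
    have step : 4 * τ ^ 3 * (1 - s ^ 2) * s ^ 2 ≤
        4 * τ ^ 2 * ((s + τ) * s ^ 2 * Real.exp (-s ^ 2)) := by
      have c1 : 4 * τ ^ 3 * (1 - s ^ 2) * s ^ 2 ≤ 4 * τ ^ 3 * Real.exp (-s ^ 2) * s ^ 2 := by
        have hc : (0:ℝ) ≤ 4 * τ ^ 3 * s ^ 2 := by positivity
        nlinarith
      have c2 : 4 * τ ^ 3 * Real.exp (-s ^ 2) * s ^ 2 ≤
          4 * τ ^ 2 * ((s + τ) * s ^ 2 * Real.exp (-s ^ 2)) := by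
        have h3 : (0:ℝ) ≤ 4 * τ ^ 2 * s ^ 3 * Real.exp (-s ^ 2) := by positivity
        nlinarith
      linarith
    calc glo s = (4 * τ ^ 3 * (1 - s ^ 2) * s ^ 2) * Real.exp (-(2 * τ * s)) := by
          rw [hglo]; ring
      _ ≤ (4 * τ ^ 2 * ((s + τ) * s ^ 2 * Real.exp (-s ^ 2))) * Real.exp (-(2 * τ * s)) :=
          mul_le_mul_of_nonneg_right step hE1.le
      _ = gmid s := by rw [hgmid]; ring
  -- integrabilities
  have i2 : IntegrableOn (fun s : ℝ => s ^ 2 * Real.exp (-(2 * τ * s))) (Set.Ioi 0) := by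
    have := key_int 2 hb; simpa [mul_assoc] using this
  have i3 : IntegrableOn (fun s : ℝ => s ^ 3 * Real.exp (-(2 * τ * s))) (Set.Ioi 0) := by
    have := key_int 3 hb; simpa [mul_assoc] using this
  have i4 : IntegrableOn (fun s : ℝ => s ^ 4 * Real.exp (-(2 * τ * s))) (Set.Ioi 0) := by
    have := key_int 4 hb; simpa [mul_assoc] using this
  have iup : IntegrableOn gup (Set.Ioi 0) := (i2.const_mul _).add (i3.const_mul _)
  have ilo : IntegrableOn glo (Set.Ioi 0) := (i2.const_mul _).sub (i4.const_mul _)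
  have imid : IntegrableOn gmid (Set.Ioi 0) := by
    refine Integrable.mono' iup ?_ ?_
    · refine (Continuous.aestronglyMeasurable ?_).restrict
      rw [hgmid]; fun_prop
    · refine (ae_restrict_iff' measurableSet_Ioi).2 (ae_of_all _ fun s hs => ?_)
      rw [Real.norm_eq_abs, abs_of_nonneg (hmid_nonneg s hs)]
      exact hup_pt s hs
  -- integral values
  have key2 := key 2 hb
  have key3 := key 3 hb
  have key4 := key 4 hb
  have vup : ∫ s in Set.Ioi (0:ℝ), gup s = 1 + 3 / (2 * τ ^ 2) := by
    rw [hgup, integral_add (i2.const_mul _) (i3.const_mul _),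
      integral_const_mul _ _, integral_const_mul _ _, key2, key3]
    norm_num [Nat.factorial]
    field_simp
    ring
  have vlo : ∫ s in Set.Ioi (0:ℝ), glo s = 1 - 3 / τ ^ 2 := by
    rw [hglo, integral_sub (i2.const_mul _) (i4.const_mul _),
      integral_const_mul _ _, integral_const_mul _ _, key2, key4]
    norm_num [Nat.factorial]
    field_simp
    ring
  constructor
  · rw [hrep, ← vlo]
    exact setIntegral_mono_on ilo imid measurableSet_Ioi hlo_pt
  · rw [hrep, ← vup]
    exact setIntegral_mono_on imid iup measurableSet_Ioi hup_pt

/-- Laplace-type asymptotic for the Gaussian tail integral `χ₂`: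
`lim_{τ → ∞} 4 τ² e^{τ²} χ₂(τ) = 1`, i.e.
`∫_τ^∞ ω (ω − τ)² e^{−ω²} dω ∼ e^{−τ²}/(4τ²)` as `τ → ∞`. -/
theorem chi2_laplace_asymptotic :
    Tendsto (fun τ : ℝ => 4 * τ ^ 2 * Real.exp (τ ^ 2) * chi2 τ) atTop (nhds 1) := by
  have hpow : Tendsto (fun τ : ℝ => τ ^ 2) atTop atTop :=
    tendsto_pow_atTop (by norm_num)
  have h1 : Tendsto (fun τ : ℝ => 1 - 3 / τ ^ 2) atTop (nhds 1) := by
    have := (tendsto_const_nhds (x := (3:ℝ)) (f := atTop)).div_atTop hpow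
    simpa using tendsto_const_nhds.sub this
  have h2 : Tendsto (fun τ : ℝ => 1 + 3 / (2 * τ ^ 2)) atTop (nhds 1) := by
    have : Tendsto (fun τ : ℝ => 2 * τ ^ 2) atTop atTop := hpow.const_mul_atTop (by norm_num)
    have := (tendsto_const_nhds (x := (3:ℝ)) (f := atTop)).div_atTop this
    simpa using tendsto_const_nhds.add this
  refine tendsto_of_tendsto_of_tendsto_of_le_of_le' h1 h2 ?_ ?_
  · filter_upwards [eventually_ge_atTop (1:ℝ)] with τ hτ
    exact (chi2_bounds τ hτ).1
  · filter_upwards [eventually_ge_atTop (1:ℝ)] with τ hτ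
    exact (chi2_bounds τ hτ).2
end
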